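/- arXiv:2301.10199 — 5 statements merged into one kernel-verified Lean document; each statement's English description precedes it below -/
import Mathlib

section
/- Let 0 < σ ≤ d, d ≥ 1, ζ ∈ (0,1], and ε ∈ (0, ζ/6]. Let f : [0,1] → [0,∞) be a piecewise affine d-Lipschitz function with f(0) = 0 such that f(x) ≥ σx − ε for all x ∈ [0,1]. Then there exists a point a ∈ [ζ/(12d), 1/3] such that f(x) − f(a) ≥ (σ − ζ)(x − a) for all x ∈ [a,1]. -/
/-- `f` is piecewise affine on `[a,b]`. -/
def PiecewiseAffineOn (f : ℝ → ℝ) (a b : ℝ) : Prop :=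
  ∃ (n : ℕ) (t : ℕ → ℝ), t 0 = a ∧ t n = b ∧ (∀ i < n, t i < t (i + 1)) ∧
    ∀ i < n, ∃ p q : ℝ, ∀ x ∈ Set.Icc (t i) (t (i + 1)), f x = p * x + q

/-- Corollary to Lemma on weak branching decompositions:
if `f : [0,1] → [0,∞)` is piecewise affine, `D`-Lipschitz, `f(0) = 0` and
`(f,0,1)` is `(σ,ε)`-superlinear with `0 < σ ≤ D`, `D ≥ 1`, `ζ ∈ (0,1]`,
`ε ∈ (0,ζ/6]`, then there is `a ∈ [ζ/(12D), 1/3]` with `(f,a,1)` being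
`(σ−ζ,0)`-superlinear. -/
theorem stmt6 (σ D ζ ε : ℝ) (f : ℝ → ℝ)
    (hσ0 : 0 < σ) (hσd : σ ≤ D) (hD : 1 ≤ D) (hζ0 : 0 < ζ) (hζ1 : ζ ≤ 1)
    (hε0 : 0 < ε) (hεζ : ε ≤ ζ / 6)
    (hpa : PiecewiseAffineOn f 0 1)
    (hlip : ∀ x ∈ Set.Icc (0:ℝ) 1, ∀ y ∈ Set.Icc (0:ℝ) 1, |f x - f y| ≤ D * |x - y|)
    (hf0 : f 0 = 0)
    (hnn : ∀ x ∈ Set.Icc (0:ℝ) 1, 0 ≤ f x)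
    (hsup : ∀ x ∈ Set.Icc (0:ℝ) 1, σ * x - ε ≤ f x) :
    ∃ a : ℝ, ζ / (12 * D) ≤ a ∧ a ≤ 1 / 3 ∧
      ∀ x ∈ Set.Icc a 1, (σ - ζ) * (x - a) ≤ f x - f a := by
  have hD0 : (0:ℝ) < D := lt_of_lt_of_le one_pos hD
  set L : ℝ := ζ / (12 * D) with hL
  have hL0 : 0 < L := by positivity
  have hL12 : L ≤ 1/12 := by
    rw [hL, div_le_div_iff₀ (by positivity) (by norm_num)]
    nlinarith
  have hLD : L * D = ζ / 12 := by
    rw [hL]; field_simp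
  have hL13 : L ≤ 1/3 := by linarith
  have hsub : Set.Icc L (1/3:ℝ) ⊆ Set.Icc 0 1 :=
    Set.Icc_subset_Icc hL0.le (by norm_num)
  have hcont : ContinuousOn f (Set.Icc (0:ℝ) 1) := by
    have hlw : LipschitzOnWith (Real.toNNReal D) f (Set.Icc (0:ℝ) 1) := by
      apply LipschitzOnWith.of_dist_le_mul
      intro x hx y hy
      have := hlip x hx y hy
      simpa [Real.dist_eq, Real.coe_toNNReal D hD0.le] using this
    exact hlw.continuousOn
  have hg : ContinuousOn (fun x => f x - (σ - ζ) * x) (Set.Icc L (1/3)) :=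
    (hcont.mono hsub).sub (continuousOn_const.mul continuousOn_id)
  obtain ⟨a, haS, hamin⟩ := isCompact_Icc.exists_isMinOn
    (Set.nonempty_Icc.mpr hL13) hg
  obtain ⟨haL, ha13⟩ := haS
  have hmin := isMinOn_iff.mp hamin
  -- bound g L
  have hLmem : L ∈ Set.Icc (0:ℝ) 1 := ⟨hL0.le, by linarith⟩
  have hfL : f L ≤ D * L := by
    have := hlip L hLmem 0 ⟨le_refl 0, zero_le_one⟩
    rw [hf0, sub_zero, sub_zero, abs_of_nonneg hL0.le] at this
    exact (le_abs_self _).trans this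
  have hgL : f L - (σ - ζ) * L < ζ / 6 := by
    nlinarith [mul_pos hσ0 hL0, mul_le_mul_of_nonneg_left hL12 hζ0.le]
  have hga : f a - (σ - ζ) * a ≤ f L - (σ - ζ) * L :=
    hmin L ⟨le_refl L, hL13⟩
  refine ⟨a, haL, ha13, ?_⟩
  intro x hx
  obtain ⟨hax, hx1⟩ := hx
  rcases le_or_gt x (1/3) with hx3 | hx3
  · have := hmin x ⟨haL.trans hax, hx3⟩
    beta_reduce at this
    nlinarith
  · have hxmem : x ∈ Set.Icc (0:ℝ) 1 := ⟨by linarith, hx1⟩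
    have hsx := hsup x hxmem
    have : ζ / 3 ≤ ζ * x := by nlinarith
    nlinarith
end

section
/- Let A, B ⊂ ℝ be finite with A δ-separated, and suppose E_δ(A,B) ≥ |A||B|²/K for some K ≥ 1. Then the set of popular pairs G := {(a₁,b₁) ∈ A × B : |{(a₂,b₂) ∈ A × B : |(a₁+b₁)−(a₂+b₂)| ≤ δ}| ≥ |B|/(2K)} satisfies |G| ≥ |A||B|/(4K), and the restricted sumset A +_G B = {a+b : (a,b) ∈ G} satisfies |A +_G B|_δ ≤ 2K|A| (up to an absolute multiplicative constant). -/
noncomputable def addEnergy (δ : ℝ) (A B : Set ℝ) : ℕ :=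
  Set.ncard {q : (ℝ × ℝ) × ℝ × ℝ |
    q.1.1 ∈ A ∧ q.1.2 ∈ A ∧ q.2.1 ∈ B ∧ q.2.2 ∈ B ∧
    |(q.1.1 + q.2.1) - (q.1.2 + q.2.2)| ≤ δ}

noncomputable def cov1 (δ : ℝ) (X : Set ℝ) : ℕ :=
  Set.ncard {k : ℤ | ∃ x ∈ X, (k : ℝ) * δ ≤ x ∧ x < ((k : ℝ) + 1) * δ}

/-- The set of "popular pairs" `(a₁,b₁) ∈ A×B`, i.e. those for which at least
`|B|/(2K)` pairs `(a₂,b₂) ∈ A×B` satisfy `|(a₁+b₁)−(a₂+b₂)| ≤ δ`. -/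
def popular (δ K : ℝ) (A B : Set ℝ) : Set (ℝ × ℝ) :=
  {p | p ∈ A ×ˢ B ∧
    (B.ncard : ℝ) / (2 * K) ≤
      (Set.ncard {q : ℝ × ℝ | q ∈ A ×ˢ B ∧ |(p.1 + p.2) - (q.1 + q.2)| ≤ δ} : ℝ)}

open Finset

/-- a δ-separated set meets any closed interval of radius δ in ≤ 2 points. -/
lemma sep_two {δ : ℝ} {A : Set ℝ}
    (hsep : ∀ a ∈ A, ∀ a' ∈ A, a ≠ a' → δ < |a - a'|)
    (s : Finset ℝ) (hsA : ∀ x ∈ s, x ∈ A) (t : ℝ) (h : ∀ x ∈ s, |t - x| ≤ δ) :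
    s.card ≤ 2 := by
  classical
  have key : ∀ (u : Finset ℝ), (∀ x ∈ u, x ∈ A) →
      (∀ x ∈ u, ∀ y ∈ u, |x - y| ≤ δ) → u.card ≤ 1 := by
    intro u hu h2
    refine Finset.card_le_one.mpr fun x hx y hy => ?_
    by_contra hne
    exact absurd (h2 x hx y hy) (not_le.mpr (hsep x (hu x hx) y (hu y hy) hne))
  have := Finset.card_filter_add_card_filter_not (s := s) (fun x => x ≤ t)
  have h1 : (s.filter (fun x => x ≤ t)).card ≤ 1 := by
    refine key _ (fun x hx => hsA x (Finset.mem_filter.mp hx).1) ?_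
    intro x hx y hy
    obtain ⟨hxs, hxt⟩ := Finset.mem_filter.mp hx
    obtain ⟨hys, hyt⟩ := Finset.mem_filter.mp hy
    have hx' := abs_le.mp (h x hxs); have hy' := abs_le.mp (h y hys)
    rw [abs_le]; constructor <;> linarith
  have h2 : (s.filter (fun x => ¬ x ≤ t)).card ≤ 1 := by
    refine key _ (fun x hx => hsA x (Finset.mem_filter.mp hx).1) ?_
    intro x hx y hy
    obtain ⟨hxs, hxt⟩ := Finset.mem_filter.mp hx
    obtain ⟨hys, hyt⟩ := Finset.mem_filter.mp hy
    push_neg at hxt hyt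
    have hx' := abs_le.mp (h x hxs); have hy' := abs_le.mp (h y hys)
    rw [abs_le]; constructor <;> linarith
  omega

/-- if `A` is `δ`-separated and `E_δ(A,B) ≥ |A||B|²/K`, then the popular
pairs `G` satisfy `|G| ≥ |A||B|/(4K)` and `|A +_G B|_δ ≲ K|A|` (with an absolute
multiplicative constant). -/
theorem stmt9 : ∃ C₀ : ℝ, 0 < C₀ ∧
    ∀ (δ K : ℝ) (A B : Set ℝ), 0 < δ → 1 ≤ K → A.Finite → B.Finite →
      (∀ a ∈ A, ∀ a' ∈ A, a ≠ a' → δ < |a - a'|) →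
      (A.ncard : ℝ) * B.ncard ^ 2 / K ≤ (addEnergy δ A B : ℝ) →
      (A.ncard : ℝ) * B.ncard / (4 * K) ≤ ((popular δ K A B).ncard : ℝ) ∧
        (cov1 δ {x : ℝ | ∃ p ∈ popular δ K A B, x = p.1 + p.2} : ℝ) ≤
          C₀ * K * A.ncard := by
  classical
  refine ⟨6, by norm_num, ?_⟩
  intro δ K A B hδ hK hA hB hsep hE
  have hK0 : (0:ℝ) < K := by linarith
  set a : Finset ℝ := hA.toFinset with ha_def
  set b : Finset ℝ := hB.toFinset with hb_def
  have hamem : ∀ x : ℝ, x ∈ a ↔ x ∈ A := fun x => hA.mem_toFinset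
  have hbmem : ∀ x : ℝ, x ∈ b ↔ x ∈ B := fun x => hB.mem_toFinset
  have hnA : (A.ncard : ℝ) = a.card := by
    rw [Set.ncard_eq_toFinset_card A hA]
  have hnB : (B.ncard : ℝ) = b.card := by
    rw [Set.ncard_eq_toFinset_card B hB]
  set ab : Finset (ℝ × ℝ) := a ×ˢ b with hab_def
  -- the neighbourhood finset
  set rF : ℝ × ℝ → Finset (ℝ × ℝ) :=
    fun p => ab.filter (fun q => |(p.1 + p.2) - (q.1 + q.2)| ≤ δ) with hrF_def
  have hNset : ∀ p : ℝ × ℝ,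
      {q : ℝ × ℝ | q ∈ A ×ˢ B ∧ |(p.1 + p.2) - (q.1 + q.2)| ≤ δ} = ↑(rF p) := by
    intro p
    ext q
    simp [hrF_def, hab_def, Finset.mem_filter, Finset.mem_product, hamem, hbmem,
      Set.mem_prod, and_assoc]
  -- popular as a finset
  set GF : Finset (ℝ × ℝ) :=
    ab.filter (fun p => (B.ncard : ℝ) / (2 * K) ≤ ((rF p).card : ℝ)) with hGF_def
  have hpop : popular δ K A B = ↑GF := by
    ext p
    simp only [popular, Set.mem_setOf_eq, hNset p, Set.ncard_coe_finset]
    simp [hGF_def, hab_def, Finset.mem_product, hamem, hbmem, Set.mem_prod]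
  have hpopcard : ((popular δ K A B).ncard : ℝ) = GF.card := by
    rw [hpop, Set.ncard_coe_finset]
  -- energy as a sum
  set TF : Finset ((ℝ × ℝ) × ℝ × ℝ) :=
    (ab ×ˢ ab).filter (fun x => |(x.1.1 + x.1.2) - (x.2.1 + x.2.2)| ≤ δ) with hTF_def
  have hE1 : addEnergy δ A B = TF.card := by
    have hSeq : {q : (ℝ × ℝ) × ℝ × ℝ |
        q.1.1 ∈ A ∧ q.1.2 ∈ A ∧ q.2.1 ∈ B ∧ q.2.2 ∈ B ∧
        |(q.1.1 + q.2.1) - (q.1.2 + q.2.2)| ≤ δ}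
        = (Equiv.prodProdProdComm ℝ ℝ ℝ ℝ) ⁻¹' (↑TF) := by
      ext ⟨⟨a1, a2⟩, b1, b2⟩
      simp [Equiv.prodProdProdComm, hTF_def, Finset.mem_filter, Finset.mem_product,
        hamem, hbmem, hab_def]
      tauto
    rw [_root_.addEnergy, hSeq]
    rw [show (Equiv.prodProdProdComm ℝ ℝ ℝ ℝ) ⁻¹' (↑TF) = (Equiv.prodProdProdComm ℝ ℝ ℝ ℝ).symm '' ↑TF from
      ((Equiv.prodProdProdComm ℝ ℝ ℝ ℝ).symm.image_eq_preimage_symm _).symm]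
    rw [Set.ncard_image_of_injective _ (Equiv.injective _), Set.ncard_coe_finset]
  have hE2 : TF.card = ∑ p ∈ ab, (rF p).card := by
    rw [Finset.card_eq_sum_card_fiberwise (f := Prod.fst) (t := ab)
      (fun x hx => (Finset.mem_product.mp (Finset.mem_filter.mp hx).1).1)]
    refine Finset.sum_congr rfl fun p hp => ?_
    refine Finset.card_nbij' (fun x => x.2) (fun q => (p, q)) ?_ ?_ ?_ ?_
    · rintro x hx
      simp only [Finset.mem_coe, Finset.mem_filter, hTF_def, Finset.mem_product] at hx
      obtain ⟨⟨⟨h1, h2⟩, hcond⟩, hfst⟩ := hx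
      simp only [Finset.mem_coe, hrF_def, Finset.mem_filter]
      rw [← hfst]
      exact ⟨h2, hcond⟩
    · rintro q hq
      simp only [Finset.mem_coe, hrF_def, Finset.mem_filter] at hq
      simp only [Finset.mem_coe, Finset.mem_filter, hTF_def, Finset.mem_product]
      exact ⟨⟨⟨hp, hq.1⟩, hq.2⟩, trivial⟩
    · rintro x hx
      simp only [Finset.mem_coe, Finset.mem_filter] at hx
      exact Prod.ext hx.2.symm rfl
    · intro q hq
      rfl
  -- pointwise bound: r(p) ≤ 2|b|
  have r2 : ∀ p : ℝ × ℝ, (rF p).card ≤ 2 * b.card := by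
    intro p
    have hfib : (rF p).card = ∑ y ∈ b, ((rF p).filter (fun q => q.2 = y)).card := by
      apply Finset.card_eq_sum_card_fiberwise (f := Prod.snd)
      intro x hx
      exact (Finset.mem_product.mp (Finset.mem_filter.mp hx).1).2
    rw [hfib]
    have hle : ∀ y ∈ b, ((rF p).filter (fun q => q.2 = y)).card ≤ 2 := by
      intro y hy
      have hinj : Set.InjOn Prod.fst (((rF p).filter (fun q => q.2 = y)) : Set (ℝ × ℝ)) := by
        intro u hu v hv huv
        simp only [Finset.coe_filter, Set.mem_setOf_eq] at hu hv
        exact Prod.ext huv (hu.2.trans hv.2.symm)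
      rw [← Finset.card_image_of_injOn hinj]
      refine sep_two hsep _ ?_ (p.1 + p.2 - y) ?_
      · intro x hx
        simp only [Finset.mem_image, Finset.mem_filter] at hx
        obtain ⟨q, ⟨hq, hq2⟩, rfl⟩ := hx
        have := (Finset.mem_product.mp (Finset.mem_filter.mp hq).1).1
        exact (hamem _).mp this
      · intro x hx
        simp only [Finset.mem_image, Finset.mem_filter] at hx
        obtain ⟨q, ⟨hq, hq2⟩, rfl⟩ := hx
        have hcond := (Finset.mem_filter.mp hq).2
        have heq : p.1 + p.2 - y - q.1 = p.1 + p.2 - (q.1 + q.2) := by rw [hq2]; ring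
        rw [heq]
        exact hcond
    calc ∑ y ∈ b, ((rF p).filter (fun q => q.2 = y)).card
        ≤ ∑ _y ∈ b, 2 := Finset.sum_le_sum hle
      _ = 2 * b.card := by rw [Finset.sum_const, smul_eq_mul, mul_comm]
  -- energy lower bound in ℝ
  have hEr : (a.card : ℝ) * (b.card : ℝ) ^ 2 / K ≤ ∑ p ∈ ab, ((rF p).card : ℝ) := by
    calc (a.card : ℝ) * (b.card : ℝ) ^ 2 / K
        = (A.ncard : ℝ) * (B.ncard : ℝ) ^ 2 / K := by rw [hnA, hnB]
      _ ≤ (_root_.addEnergy δ A B : ℝ) := hE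
      _ = ∑ p ∈ ab, ((rF p).card : ℝ) := by rw [hE1, hE2]; push_cast; rfl
  have hsplit := Finset.sum_filter_add_sum_filter_not ab
    (fun p => (B.ncard : ℝ) / (2 * K) ≤ ((rF p).card : ℝ)) (fun p => ((rF p).card : ℝ))
  have hGsum : ∑ p ∈ GF, ((rF p).card : ℝ) ≤ (GF.card : ℝ) * (2 * b.card) := by
    calc ∑ p ∈ GF, ((rF p).card : ℝ) ≤ ∑ _p ∈ GF, (2 * b.card : ℝ) := by
          refine Finset.sum_le_sum fun p _ => ?_
          exact_mod_cast r2 p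
      _ = (GF.card : ℝ) * (2 * b.card) := by rw [Finset.sum_const, nsmul_eq_mul]
  have hbadsum : ∑ p ∈ ab.filter (fun p => ¬ ((B.ncard : ℝ) / (2 * K) ≤ ((rF p).card : ℝ))),
      ((rF p).card : ℝ) ≤ (ab.card : ℝ) * ((B.ncard : ℝ) / (2 * K)) := by
    have hthr : (0:ℝ) ≤ (B.ncard : ℝ) / (2 * K) := by positivity
    calc ∑ p ∈ ab.filter (fun p => ¬ ((B.ncard : ℝ) / (2 * K) ≤ ((rF p).card : ℝ))),
        ((rF p).card : ℝ)
        ≤ ∑ _p ∈ ab.filter (fun p => ¬ ((B.ncard : ℝ) / (2 * K) ≤ ((rF p).card : ℝ))),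
          ((B.ncard : ℝ) / (2 * K)) := by
          refine Finset.sum_le_sum fun p hp => ?_
          exact le_of_lt (lt_of_not_ge (Finset.mem_filter.mp hp).2)
      _ = ((ab.filter _).card : ℝ) * ((B.ncard : ℝ) / (2 * K)) := by
          rw [Finset.sum_const, nsmul_eq_mul]
      _ ≤ (ab.card : ℝ) * ((B.ncard : ℝ) / (2 * K)) := by
          apply mul_le_mul_of_nonneg_right _ hthr
          exact_mod_cast Finset.card_le_card (Finset.filter_subset _ _)
  have habcard : (ab.card : ℝ) = (a.card : ℝ) * (b.card : ℝ) := by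
    rw [hab_def, Finset.card_product]; push_cast; rfl
  have hkey : (a.card : ℝ) * (b.card : ℝ) ^ 2 / K ≤
      (GF.card : ℝ) * (2 * b.card) + (a.card : ℝ) * (b.card : ℝ) * ((B.ncard : ℝ) / (2 * K)) := by
    have : ∑ p ∈ GF, ((rF p).card : ℝ) +
        ∑ p ∈ ab.filter (fun p => ¬ ((B.ncard : ℝ) / (2 * K) ≤ ((rF p).card : ℝ))),
        ((rF p).card : ℝ) = ∑ p ∈ ab, ((rF p).card : ℝ) := hsplit
    rw [habcard] at hbadsum
    linarith
  have goal1 : (A.ncard : ℝ) * B.ncard / (4 * K) ≤ ((popular δ K A B).ncard : ℝ) := by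
    rw [hpopcard, hnA, hnB]
    rw [hnB] at hkey
    rcases eq_or_lt_of_le (Nat.cast_nonneg (α := ℝ) b.card) with hb0 | hb0
    · rw [← hb0]
      simp
    · rw [div_le_iff₀ (by positivity : (0:ℝ) < 4 * K)]
      have h2K : (0:ℝ) < 2 * K := by positivity
      have hkey2 : (a.card : ℝ) * (b.card : ℝ) ^ 2 * 2 ≤
          (GF.card : ℝ) * (2 * b.card) * (2 * K) + (a.card : ℝ) * (b.card : ℝ) * (b.card : ℝ) := by
        have := mul_le_mul_of_nonneg_right hkey (le_of_lt h2K)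
        have e1 : (a.card : ℝ) * (b.card : ℝ) ^ 2 / K * (2 * K) =
            (a.card : ℝ) * (b.card : ℝ) ^ 2 * 2 := by
          field_simp
          try ring
        have e2 : ((GF.card : ℝ) * (2 * b.card) +
            (a.card : ℝ) * (b.card : ℝ) * ((b.card : ℝ) / (2 * K))) * (2 * K) =
            (GF.card : ℝ) * (2 * b.card) * (2 * K) +
            (a.card : ℝ) * (b.card : ℝ) * (b.card : ℝ) := by
          field_simp
          try ring
        rw [e1, e2] at this
        exact this
      nlinarith [hb0, Nat.cast_nonneg (α := ℝ) a.card, Nat.cast_nonneg (α := ℝ) GF.card]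
  refine ⟨goal1, ?_⟩
  -- part 2: covering number bound
  set f : ℝ × ℝ → ℤ := fun p => ⌊(p.1 + p.2) / δ⌋ with hf_def
  set KF : Finset ℤ := GF.image f with hKF_def
  have hfloor : ∀ (k : ℤ) (x : ℝ),
      ((k : ℝ) * δ ≤ x ∧ x < ((k : ℝ) + 1) * δ) ↔ ⌊x / δ⌋ = k := by
    intro k x
    rw [Int.floor_eq_iff]
    constructor
    · rintro ⟨h1, h2⟩
      exact ⟨(le_div_iff₀ hδ).mpr (by linarith), (div_lt_iff₀ hδ).mpr (by linarith)⟩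
    · rintro ⟨h1, h2⟩
      exact ⟨by linarith [(le_div_iff₀ hδ).mp h1], by linarith [(div_lt_iff₀ hδ).mp h2]⟩
  have hcov : (cov1 δ {x : ℝ | ∃ p ∈ popular δ K A B, x = p.1 + p.2} : ℕ) = KF.card := by
    have hset : {k : ℤ | ∃ x ∈ {x : ℝ | ∃ p ∈ popular δ K A B, x = p.1 + p.2},
        (k : ℝ) * δ ≤ x ∧ x < ((k : ℝ) + 1) * δ} = ↑KF := by
      ext k
      simp only [Set.mem_setOf_eq, hKF_def, Finset.coe_image, Set.mem_image,
        Finset.mem_coe, hpop]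
      constructor
      · rintro ⟨x, ⟨p, hp, rfl⟩, hx⟩
        exact ⟨p, hp, (hfloor k _).mp hx⟩
      · rintro ⟨p, hp, rfl⟩
        exact ⟨p.1 + p.2, ⟨p, hp, rfl⟩, (hfloor _ _).mpr rfl⟩
    rw [cov1, hset, Set.ncard_coe_finset]
  set FK : ℤ → Finset (ℝ × ℝ) := fun k =>
    ab.filter (fun q => ((k : ℝ) - 1) * δ ≤ q.1 + q.2 ∧ q.1 + q.2 < ((k : ℝ) + 2) * δ)
    with hFK_def
  have hthr : ∀ k ∈ KF, (B.ncard : ℝ) / (2 * K) ≤ ((FK k).card : ℝ) := by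
    intro k hk
    obtain ⟨p, hpGF, hfp⟩ := Finset.mem_image.mp hk
    have hp2 := (Finset.mem_filter.mp hpGF).2
    refine le_trans hp2 ?_
    have hsub : rF p ⊆ FK k := by
      intro q hq
      obtain ⟨hqab, hcond⟩ := Finset.mem_filter.mp hq
      have hfl : (k : ℝ) * δ ≤ p.1 + p.2 ∧ p.1 + p.2 < ((k : ℝ) + 1) * δ :=
        (hfloor k _).mpr hfp
      have habs := abs_le.mp hcond
      refine Finset.mem_filter.mpr ⟨hqab, ?_, ?_⟩
      · have e : ((k : ℝ) - 1) * δ = (k : ℝ) * δ - δ := by ring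
        rw [e]; linarith [habs.2, hfl.1]
      · have e : ((k : ℝ) + 2) * δ = ((k : ℝ) + 1) * δ + δ := by ring
        rw [e]; linarith [habs.1, hfl.2]
    exact_mod_cast Nat.cast_le.mpr (Finset.card_le_card hsub)
  have hsum1 : (KF.card : ℝ) * ((B.ncard : ℝ) / (2 * K)) ≤ ∑ k ∈ KF, ((FK k).card : ℝ) := by
    calc (KF.card : ℝ) * ((B.ncard : ℝ) / (2 * K))
        = ∑ _k ∈ KF, ((B.ncard : ℝ) / (2 * K)) := by rw [Finset.sum_const, nsmul_eq_mul]
      _ ≤ ∑ k ∈ KF, ((FK k).card : ℝ) := Finset.sum_le_sum hthr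
  have hsum2 : ∑ k ∈ KF, (FK k).card ≤ 3 * ab.card := by
    have hrw : ∀ k : ℤ, (FK k).card = ∑ q ∈ ab,
        if ((k : ℝ) - 1) * δ ≤ q.1 + q.2 ∧ q.1 + q.2 < ((k : ℝ) + 2) * δ then 1 else 0 := by
      intro k
      rw [hFK_def]
      exact Finset.card_filter _ _
    calc ∑ k ∈ KF, (FK k).card
        = ∑ k ∈ KF, ∑ q ∈ ab,
          (if ((k : ℝ) - 1) * δ ≤ q.1 + q.2 ∧ q.1 + q.2 < ((k : ℝ) + 2) * δ then 1 else 0) :=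
          Finset.sum_congr rfl fun k _ => hrw k
      _ = ∑ q ∈ ab, ∑ k ∈ KF,
          (if ((k : ℝ) - 1) * δ ≤ q.1 + q.2 ∧ q.1 + q.2 < ((k : ℝ) + 2) * δ then 1 else 0) :=
          Finset.sum_comm
      _ ≤ ∑ _q ∈ ab, 3 := by
          refine Finset.sum_le_sum fun q _ => ?_
          rw [← Finset.card_filter]
          set m : ℤ := ⌊(q.1 + q.2) / δ⌋ with hm_def
          have hsub2 : KF.filter (fun k : ℤ => (((k : ℤ) : ℝ) - 1) * δ ≤ q.1 + q.2 ∧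
              q.1 + q.2 < (((k : ℤ) : ℝ) + 2) * δ) ⊆ Finset.Icc (m - 1) (m + 1) := by
            intro k hk
            obtain ⟨_, h1, h2⟩ := Finset.mem_filter.mp hk
            have hk1 : k - 1 ≤ m := by
              apply Int.le_floor.mpr
              rw [le_div_iff₀ hδ]
              push_cast
              linarith
            have hk2 : m < k + 2 := by
              have hmle : (m : ℝ) ≤ (q.1 + q.2) / δ := Int.floor_le _
              have hlt : (q.1 + q.2) / δ < (k : ℝ) + 2 := (div_lt_iff₀ hδ).mpr h2
              have : (m : ℝ) < (k : ℝ) + 2 := lt_of_le_of_lt hmle hlt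
              exact_mod_cast this
            rw [Finset.mem_Icc]
            omega
          refine le_trans (Finset.card_le_card hsub2) ?_
          rw [Int.card_Icc]
          omega
      _ = 3 * ab.card := by rw [Finset.sum_const, smul_eq_mul, mul_comm]
  -- finish
  rw [hcov, hnA]
  rcases Nat.eq_zero_or_pos b.card with hb0 | hb0
  · have hGFempty : GF = ∅ := by
      apply Finset.eq_empty_of_forall_notMem
      intro p hp
      have := (Finset.mem_product.mp (Finset.mem_filter.mp hp).1).2
      rw [Finset.card_eq_zero.mp hb0] at this
      exact absurd this (Finset.notMem_empty _)
    rw [hKF_def, hGFempty]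
    simp
    try positivity
  · have hbR : (0 : ℝ) < (b.card : ℝ) := by exact_mod_cast hb0
    have hsum2R : ∑ k ∈ KF, ((FK k).card : ℝ) ≤ 3 * ((a.card : ℝ) * (b.card : ℝ)) := by
      have := hsum2
      have h3 : ((∑ k ∈ KF, (FK k).card : ℕ) : ℝ) ≤ ((3 * ab.card : ℕ) : ℝ) := by
        exact_mod_cast this
      push_cast at h3
      rw [habcard] at h3
      convert h3 using 2
    rw [hnB] at hsum1
    have hchain : (KF.card : ℝ) * ((b.card : ℝ) / (2 * K)) ≤ 3 * ((a.card : ℝ) * (b.card : ℝ)) :=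
      le_trans hsum1 hsum2R
    have hfin : (KF.card : ℝ) * (b.card : ℝ) ≤ (6 * K * (a.card : ℝ)) * (b.card : ℝ) := by
      have hmul := mul_le_mul_of_nonneg_right hchain (by positivity : (0:ℝ) ≤ 2 * K)
      have e1 : (KF.card : ℝ) * ((b.card : ℝ) / (2 * K)) * (2 * K) =
          (KF.card : ℝ) * (b.card : ℝ) := by rw [mul_assoc, div_mul_cancel₀ _ (by positivity)]
      have e2 : 3 * ((a.card : ℝ) * (b.card : ℝ)) * (2 * K) =
          (6 * K * (a.card : ℝ)) * (b.card : ℝ) := by ring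
      rw [e1, e2] at hmul
      exact hmul
    exact le_of_mul_le_mul_right hfin hbR
end

section
/- Fix d ∈ ℕ and ε > 0. There exists τ = τ(ε,d) > 0 such that for any d-Lipschitz function f : [a,b] → ℝ there is a finite family of non-overlapping intervals {[c_j,d_j]}_{j=1}^M ⊂ [a,b] with: (i) f is ε-linear on each [c_j,d_j], i.e. |f(x) − L_{f,c_j,d_j}(x)| ≤ ε(d_j − c_j) for all x ∈ [c_j,d_j], where L_{f,c_j,d_j} is the affine function agreeing with f at c_j and d_j; (ii) d_j − c_j ≥ τ(b−a) for all j; (iii) the total length of [a,b] not covered by the intervals is at most ε(b−a). -/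
namespace S14
noncomputable section
open Finset

variable (a b : ℝ) (f : ℝ → ℝ)

/-- dyadic point -/
def pt (m i : ℕ) : ℝ := a + i * (b - a) / 2 ^ m

/-- slope of dyadic interval -/
def sl (m i : ℕ) : ℝ := (f (pt a b m (i+1)) - f (pt a b m i)) * 2 ^ m / (b - a)

/-- energy at scale m -/
def en (m : ℕ) : ℝ := ∑ i ∈ range (2 ^ m), (sl a b f m i) ^ 2 / 2 ^ m

lemma pt_zero (m : ℕ) : pt a b m 0 = a := by simp [pt]

lemma pt_top (m : ℕ) : pt a b m (2^m) = b := by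
  simp only [pt]; push_cast
  rw [mul_div_cancel_left₀ _ (by positivity : (2:ℝ)^m ≠ 0)]; ring

lemma pt_succ_two_mul (m i : ℕ) : pt a b (m+1) (2*i) = pt a b m i := by
  simp only [pt]
  push_cast
  ring

lemma pt_mono (hab : a ≤ b) (m : ℕ) {i j : ℕ} (hij : i ≤ j) : pt a b m i ≤ pt a b m j := by
  simp only [pt]
  have : (i:ℝ) ≤ j := by exact_mod_cast hij
  have hba := sub_nonneg.2 hab
  gcongr

lemma pt_strict_mono (hab : a < b) (m : ℕ) {i j : ℕ} (hij : i < j) : pt a b m i < pt a b m j := by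
  simp only [pt]
  have : (i:ℝ) < j := by exact_mod_cast hij
  have hba := sub_pos.2 hab
  gcongr


lemma sl_avg (hab : a < b) (m i : ℕ) :
    sl a b f m i = (sl a b f (m+1) (2*i) + sl a b f (m+1) (2*i+1)) / 2 := by
  have hba : b - a ≠ 0 := by linarith
  have h1 : pt a b (m+1) (2*i) = pt a b m i := pt_succ_two_mul a b m i
  have h2 : pt a b (m+1) (2*i+1+1) = pt a b m (i+1) := by
    have := pt_succ_two_mul a b m (i+1)
    rw [← this]; ring_nf
  simp only [sl, h1, h2]
  field_simp
  ring

lemma pt_mem (hab : a ≤ b) (m : ℕ) {i : ℕ} (hi : i ≤ 2^m) : pt a b m i ∈ Set.Icc a b := by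
  constructor
  · have := pt_mono a b hab m (Nat.zero_le i); rwa [pt_zero] at this
  · have := pt_mono a b hab m hi; rwa [pt_top] at this

lemma sl_abs_le (d : ℕ) (hab : a < b)
    (hf : ∀ x ∈ Set.Icc a b, ∀ y ∈ Set.Icc a b, |f x - f y| ≤ (d : ℝ) * |x - y|)
    (m : ℕ) {i : ℕ} (hi : i + 1 ≤ 2^m) : |sl a b f m i| ≤ d := by
  have h1 := pt_mem a b hab.le m hi
  have h2 := pt_mem a b hab.le m (le_trans (Nat.le_succ i) hi)
  have hba : (0:ℝ) < b - a := by linarith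
  have h2m : (0:ℝ) < 2 ^ m := by positivity
  have hd : pt a b m (i+1) - pt a b m i = (b - a) / 2 ^ m := by
    simp only [pt]; push_cast; ring
  have hL := hf _ h1 _ h2
  rw [hd, abs_div, abs_of_pos hba, abs_of_pos h2m] at hL
  rw [sl, abs_div, abs_mul, abs_of_pos hba, abs_of_pos h2m, div_le_iff₀ hba]
  calc |f (pt a b m (i+1)) - f (pt a b m i)| * 2 ^ m
      ≤ ((d:ℝ) * ((b-a)/2^m)) * 2 ^ m := by gcongr
    _ = d * (b - a) := by field_simp

lemma sum_range_two_mul (g : ℕ → ℝ) (n : ℕ) :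
    ∑ j ∈ range (2 * n), g j = ∑ i ∈ range n, (g (2*i) + g (2*i+1)) := by
  induction n with
  | zero => simp
  | succ n ih =>
    rw [Nat.mul_succ, sum_range_succ, sum_range_succ, sum_range_succ, ← ih]
    ring

lemma en_succ_sub (hab : a < b) (m : ℕ) :
    en a b f (m+1) - en a b f m
      = ∑ i ∈ range (2^m), ((sl a b f (m+1) (2*i) - sl a b f (m+1) (2*i+1))/2)^2 / 2^m := by
  have h : (2:ℕ)^(m+1) = 2 * 2^m := by ring
  rw [en, en, h, sum_range_two_mul, ← sum_sub_distrib]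
  apply sum_congr rfl
  intro i _
  rw [sl_avg a b f hab m i]
  have h2m : (0:ℝ) < 2 ^ m := by positivity
  field_simp
  ring

lemma en_nonneg (m : ℕ) : 0 ≤ en a b f m := by
  apply sum_nonneg; intro i _; positivity

lemma en_mono (hab : a < b) : Monotone (en a b f) := by
  apply monotone_nat_of_le_succ
  intro m
  have h := en_succ_sub a b f hab m
  have : 0 ≤ en a b f (m+1) - en a b f m := by
    rw [h]; apply sum_nonneg; intro i _; positivity
  linarith

lemma en_le (d : ℕ) (hab : a < b)
    (hf : ∀ x ∈ Set.Icc a b, ∀ y ∈ Set.Icc a b, |f x - f y| ≤ (d : ℝ) * |x - y|)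
    (m : ℕ) : en a b f m ≤ (d:ℝ)^2 := by
  have h2m : (0:ℝ) < 2 ^ m := by positivity
  calc en a b f m ≤ ∑ i ∈ range (2^m), (d:ℝ)^2 / 2^m := by
        apply sum_le_sum
        intro i hi
        have hi' : i + 1 ≤ 2^m := mem_range.1 hi
        have := sl_abs_le a b f d hab hf m hi'
        have h2 : (sl a b f m i)^2 ≤ (d:ℝ)^2 := by
          rw [← sq_abs (sl a b f m i)]; gcongr
        gcongr
    _ = (d:ℝ)^2 := by
        simp only [sum_const, card_range, nsmul_eq_mul]
        field_simp
        push_cast; ring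

/-- `i`-th scale-`m0` interval is good: all depth-`w` descendant slopes are `η`-close. -/
def Good (η : ℝ) (w m0 i : ℕ) : Prop :=
  ∀ r < 2^w, |sl a b f (m0+w) (i*2^w + r) - sl a b f m0 i| ≤ η

lemma bad_card (hab : a < b) (η : ℝ) (hη : 0 < η) (w m0 : ℕ) (hw : 1 ≤ w) (E : ℝ)
    (hwin : en a b f (m0 + w) - en a b f m0 ≤ E) (B : Finset ℕ)
    (hBsub : B ⊆ range (2^m0)) (hBbad : ∀ i ∈ B, ¬ Good a b f η w m0 i) :
    (B.card : ℝ) * ((η/w)^2/2^(m0+w)) ≤ E := by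
  classical
  set T : ℕ → ℕ → ℝ := fun l q =>
    if q < 2^l then ((sl a b f (l+1) (2*q) - sl a b f (l+1) (2*q+1))/2)^2 / 2^l else 0 with hT
  have hTnn : ∀ l q, 0 ≤ T l q := by
    intro l q; rw [hT]; dsimp only; split
    · positivity
    · exact le_refl 0
  -- en increments as sums of T over big range
  have hstep : ∀ l, l < m0 + w → en a b f (l+1) - en a b f l = ∑ q ∈ range (2^(m0+w)), T l q := by
    intro l hl
    rw [en_succ_sub a b f hab l]
    have hsub : range (2^l) ⊆ range (2^(m0+w)) :=
      Finset.range_subset_range.2 (Nat.pow_le_pow_right (by norm_num) (by omega))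
    have hzero : ∀ q ∈ range (2^(m0+w)), q ∉ range (2^l) → T l q = 0 := by
      intro q _ hq
      rw [hT]; dsimp only; rw [if_neg (fun h => hq (mem_range.2 h))]
    rw [← Finset.sum_subset hsub hzero]
    apply sum_congr rfl; intro q hq
    rw [hT]; dsimp only; rw [if_pos (mem_range.1 hq)]
  -- total over window
  have htot : ∑ p ∈ (Finset.Ico m0 (m0+w)) ×ˢ (range (2^(m0+w))), T p.1 p.2
      = en a b f (m0+w) - en a b f m0 := by
    rw [Finset.sum_product]
    have h1 : ∀ l ∈ Finset.Ico m0 (m0+w), ∑ q ∈ range (2^(m0+w)), T l q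
        = en a b f (l+1) - en a b f l := by
      intro l hl
      exact (hstep l (Finset.mem_Ico.1 hl).2).symm
    rw [sum_congr rfl h1, Finset.sum_Ico_eq_sum_range]
    simp only [Nat.add_sub_cancel_left]
    have := Finset.sum_range_sub (fun u => en a b f (m0 + u)) w
    simpa [add_assoc] using this
  -- witness extraction for each bad interval
  have key : ∀ i : ℕ, ∃ p : ℕ × ℕ, i ∈ B →
      p ∈ (Finset.Ico m0 (m0+w)) ×ˢ (range (2^(m0+w))) ∧
      (η/w)^2/2^(m0+w) ≤ T p.1 p.2 ∧ p.2 / 2^(p.1 - m0) = i := by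
    intro i
    by_cases hiB : i ∈ B
    swap
    · exact ⟨(0,0), fun h => absurd h hiB⟩
    have hbad := hBbad i hiB
    have hi2 : i < 2^m0 := mem_range.1 (hBsub hiB)
    simp only [Good, not_forall] at hbad
    obtain ⟨r, hr, hbig⟩ := hbad
    rw [not_le] at hbig
    set j := i*2^w + r with hj
    have hjlt : j < 2^(m0+w) := by
      rw [pow_add]
      calc j < (i+1) * 2^w := by rw [hj]; nlinarith [Nat.one_le_two_pow (n := w)]
        _ ≤ 2^m0 * 2^w := by exact Nat.mul_le_mul_right _ hi2
    have hji : j / 2^w = i := by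
      rw [hj, mul_comm, Nat.mul_add_div (Nat.two_pow_pos w),
        Nat.div_eq_of_lt hr, Nat.add_zero]
    have hwpos : (0:ℝ) < w := by exact_mod_cast hw
    -- chain: some consecutive step is > η/w
    have hchain : ∃ u < w, η/w <
        |sl a b f (m0+u+1) (j / 2^(w-(u+1))) - sl a b f (m0+u) (j / 2^(w-u))| := by
      by_contra hc
      push_neg at hc
      have htel : sl a b f (m0+w) j - sl a b f m0 i
          = ∑ u ∈ range w, (sl a b f (m0+(u+1)) (j / 2^(w-(u+1)))
              - sl a b f (m0+u) (j / 2^(w-u))) := by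
        rw [Finset.sum_range_sub (fun u => sl a b f (m0+u) (j / 2^(w-u)))]
        simp [hji]
      have habs : |sl a b f (m0+w) j - sl a b f m0 i| ≤ w * (η/w) := by
        rw [htel]
        calc |∑ u ∈ range w, _| ≤ ∑ u ∈ range w, |sl a b f (m0+(u+1)) (j / 2^(w-(u+1)))
              - sl a b f (m0+u) (j / 2^(w-u))| := Finset.abs_sum_le_sum_abs _ _
          _ ≤ ∑ u ∈ range w, (η/w) := by
              apply sum_le_sum; intro u hu
              exact hc u (mem_range.1 hu)
          _ = w * (η/w) := by rw [sum_const, card_range, nsmul_eq_mul]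
      rw [mul_div_cancel₀ _ (ne_of_gt hwpos)] at habs
      exact absurd hbig (not_lt.2 habs)
    obtain ⟨u, hu, hstep2⟩ := hchain
    set q := j / 2^(w-u) with hq
    set cj := j / 2^(w-(u+1)) with hcj
    have hcq : cj / 2 = q := by
      rw [hcj, hq, Nat.div_div_eq_div_mul, ← pow_succ]
      congr 2
      omega
    have hqlt : q < 2^(m0+u) := by
      rw [hq]
      apply Nat.div_lt_iff_lt_mul (Nat.two_pow_pos _) |>.2
      rw [← pow_add]
      have : m0 + u + (w - u) = m0 + w := by omega
      rw [this]; exact hjlt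
    refine ⟨(m0+u, q), fun _ => ⟨?_, ?_, ?_⟩⟩
    · rw [Finset.mem_product]
      constructor
      · rw [Finset.mem_Ico]; omega
      · rw [mem_range]
        calc q < 2^(m0+u) := hqlt
          _ ≤ 2^(m0+w) := Nat.pow_le_pow_right (by norm_num) (by omega)
    · -- T value bound
      have hsl : sl a b f (m0+u) q
          = (sl a b f (m0+u+1) (2*q) + sl a b f (m0+u+1) (2*q+1)) / 2 :=
        sl_avg a b f hab (m0+u) q
      have hcase : cj = 2*q ∨ cj = 2*q + 1 := by omega
      have hd2 : η/w < |(sl a b f (m0+u+1) (2*q) - sl a b f (m0+u+1) (2*q+1))/2| := by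
        rcases hcase with h | h
        · rw [h, hsl] at hstep2
          convert hstep2 using 2
          ring
        · rw [h, hsl] at hstep2
          rw [← abs_neg]
          convert hstep2 using 2
          ring
      have hnn : (0:ℝ) ≤ η/w := le_of_lt (by positivity)
      have hsq : (η/w)^2 ≤ ((sl a b f (m0+u+1) (2*q) - sl a b f (m0+u+1) (2*q+1))/2)^2 := by
        rw [← sq_abs ((sl a b f (m0+u+1) (2*q) - sl a b f (m0+u+1) (2*q+1))/2)]
        apply pow_le_pow_left₀ hnn (le_of_lt hd2)
      rw [hT]; dsimp only; rw [if_pos hqlt]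
      apply div_le_div₀ (by positivity) hsq (by positivity)
      exact pow_le_pow_right₀ one_le_two (by omega)
    · rw [hq, Nat.div_div_eq_div_mul, ← pow_add, Nat.add_sub_cancel_left]
      have : w - u + u = w := by omega
      rw [this]; exact hji
  choose φ hφ using key
  -- count
  have hinj : Set.InjOn φ B := by
    intro x hx y hy hxy
    have h1 := (hφ x hx).2.2
    have h2 := (hφ y hy).2.2
    rw [← h1, ← h2, hxy]
  calc (B.card : ℝ) * ((η/w)^2/2^(m0+w)) = ∑ _i ∈ B, ((η/w)^2/2^(m0+w)) := by
        rw [sum_const, nsmul_eq_mul]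
    _ ≤ ∑ i ∈ B, T (φ i).1 (φ i).2 := by
        apply sum_le_sum; intro i hi; exact (hφ i hi).2.1
    _ = ∑ p ∈ B.image φ, T p.1 p.2 :=
        (Finset.sum_image (f := fun p => T p.1 p.2) (fun x hx y hy h => hinj hx hy h)).symm
    _ ≤ ∑ p ∈ (Finset.Ico m0 (m0+w)) ×ˢ (range (2^(m0+w))), T p.1 p.2 := by
        apply Finset.sum_le_sum_of_subset_of_nonneg
        · intro p hp
          obtain ⟨i, hi, rfl⟩ := Finset.mem_image.1 hp
          exact (hφ i hi).1
        · intro p _ _; exact hTnn p.1 p.2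
    _ = en a b f (m0+w) - en a b f m0 := htot
    _ ≤ E := hwin

lemma pt_shift (m k i : ℕ) : pt a b (m+k) (i * 2^k) = pt a b m i := by
  simp only [pt, pow_add]
  push_cast
  field_simp

lemma diff_eq (hab : a < b) (m j : ℕ) :
    f (pt a b m (j+1)) - f (pt a b m j) = sl a b f m j * ((b-a)/2^m) := by
  have hba : b - a ≠ 0 := by linarith
  rw [sl]
  field_simp

lemma good_linear (d : ℕ) (hab : a < b)
    (hf : ∀ x ∈ Set.Icc a b, ∀ y ∈ Set.Icc a b, |f x - f y| ≤ (d : ℝ) * |x - y|)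
    (η : ℝ) (hη : 0 ≤ η) (w m0 i : ℕ) (hi : i < 2^m0) (hg : Good a b f η w m0 i) :
    ∀ x ∈ Set.Icc (pt a b m0 i) (pt a b m0 (i+1)),
      |f x - (f (pt a b m0 i) + sl a b f m0 i * (x - pt a b m0 i))|
        ≤ (η + 2*d/2^w) * ((b-a)/2^m0) := by
  intro x hx
  have hba : (0:ℝ) < b - a := by linarith
  set c := pt a b m0 i with hc
  set h := (b-a)/2^(m0+w) with hh
  have hhpos : 0 < h := by rw [hh]; positivity
  have hec : pt a b m0 (i+1) - c = 2^w * h := by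
    simp only [hc, hh, pt, pow_add]
    push_cast
    field_simp
    ring
  have hxc : 0 ≤ x - c := by have := hx.1; linarith
  have hxe : x - c ≤ 2^w * h := by have := hx.2; linarith
  set r : ℕ := min ⌊(x-c)/h⌋₊ (2^w - 1) with hr
  have h2w1 : 1 ≤ 2^w := Nat.one_le_two_pow
  have hr2w : r < 2^w := lt_of_le_of_lt (min_le_right _ _) (by omega)
  have hrle : (r:ℝ) * h ≤ x - c := by
    have h1 : (r:ℝ) ≤ ⌊(x-c)/h⌋₊ := Nat.cast_le.2 (min_le_left _ _)
    have h2 : (⌊(x-c)/h⌋₊:ℝ) ≤ (x-c)/h := Nat.floor_le (by positivity)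
    calc (r:ℝ) * h ≤ ((x-c)/h) * h := by apply mul_le_mul_of_nonneg_right (le_trans h1 h2) hhpos.le
      _ = x - c := div_mul_cancel₀ _ (ne_of_gt hhpos)
  have hxr : x - c ≤ ((r:ℝ)+1) * h := by
    rcases le_or_gt ⌊(x-c)/h⌋₊ (2^w - 1) with hcs | hcs
    · have hre : r = ⌊(x-c)/h⌋₊ := min_eq_left hcs
      have := Nat.lt_floor_add_one ((x-c)/h)
      rw [← hre] at this
      have := (div_lt_iff₀ hhpos).1 this
      linarith
    · have hre : r = 2^w - 1 := min_eq_right hcs.le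
      have : ((r:ℝ)+1) = 2^w := by
        rw [hre]
        push_cast [Nat.cast_sub h2w1]
        ring
      rw [this]; exact hxe
  set y := c + r * h with hy0
  have hjlt : i*2^w + r < 2^(m0+w) := by
    rw [pow_add]
    calc i*2^w + r < (i+1) * 2^w := by nlinarith
      _ ≤ 2^m0 * 2^w := Nat.mul_le_mul_right _ hi
  have hy : y = pt a b (m0+w) (i*2^w + r) := by
    simp only [hy0, hc, hh, pt, pow_add]
    push_cast
    field_simp
    ring
  have hyIcc : y ∈ Set.Icc a b := by
    rw [hy]; exact pt_mem a b hab.le _ hjlt.le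
  have hxIcc : x ∈ Set.Icc a b := by
    constructor
    · have := (pt_mem a b hab.le m0 hi.le).1; have := hx.1; linarith
    · have := (pt_mem a b hab.le m0 (show i+1 ≤ 2^m0 from hi)).2; have := hx.2; linarith
  have hpt0 : pt a b (m0+w) (i*2^w) = c := pt_shift a b m0 w i
  have hpt : ∀ t : ℕ, pt a b (m0+w) (i*2^w + t) = c + t * h := by
    intro t
    simp only [hc, hh, pt, pow_add]
    push_cast
    field_simp
    ring
  have hfy : f y - f c = ∑ t ∈ range r, sl a b f (m0+w) (i*2^w+t) * ((b-a)/2^(m0+w)) := by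
    have htel := Finset.sum_range_sub (fun t => f (pt a b (m0+w) (i*2^w + t))) r
    have h1 : ∀ t ∈ range r, f (pt a b (m0+w) (i*2^w + (t+1))) - f (pt a b (m0+w) (i*2^w + t))
        = sl a b f (m0+w) (i*2^w+t) * ((b-a)/2^(m0+w)) := by
      intro t _
      have he : i*2^w + (t+1) = (i*2^w+t)+1 := by omega
      rw [he]
      exact diff_eq a b f hab (m0+w) (i*2^w+t)
    rw [sum_congr rfl h1] at htel
    rw [htel]
    simp only [Nat.add_zero, hpt0, ← hy]
  have hfyL : |f y - (f c + sl a b f m0 i * (y - c))| ≤ η * (2^w * h) := by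
    have hyc : y - c = ∑ _t ∈ range r, h := by
      rw [sum_const, card_range, nsmul_eq_mul, hy0]; ring
    have heq : f y - (f c + sl a b f m0 i * (y - c))
        = ∑ t ∈ range r, (sl a b f (m0+w) (i*2^w+t) - sl a b f m0 i) * h := by
      have e1 : f y - (f c + sl a b f m0 i * (y - c))
          = (f y - f c) - sl a b f m0 i * (y - c) := by ring
      rw [e1, hfy, hyc, Finset.mul_sum, ← sum_sub_distrib]
      apply sum_congr rfl
      intro t _
      rw [← hh]
      ring
    rw [heq]
    calc |∑ t ∈ range r, (sl a b f (m0+w) (i*2^w+t) - sl a b f m0 i) * h|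
        ≤ ∑ t ∈ range r, |(sl a b f (m0+w) (i*2^w+t) - sl a b f m0 i) * h| :=
          Finset.abs_sum_le_sum_abs _ _
      _ ≤ ∑ t ∈ range r, η * h := by
          apply sum_le_sum
          intro t ht
          rw [abs_mul, abs_of_pos hhpos]
          exact mul_le_mul_of_nonneg_right
            (hg t (lt_trans (mem_range.1 ht) hr2w)) hhpos.le
      _ = r * (η * h) := by rw [sum_const, card_range, nsmul_eq_mul]
      _ ≤ 2^w * (η * h) := by
          have : (r:ℝ) ≤ 2^w := by exact_mod_cast hr2w.le
          apply mul_le_mul_of_nonneg_right this (by positivity)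
      _ = η * (2^w * h) := by ring
  -- final triangle inequality
  have hxy1 : 0 ≤ x - y := by rw [hy0]; linarith
  have hxy2 : x - y ≤ h := by rw [hy0]; linarith
  have hfxy : |f x - f y| ≤ d * h := by
    calc |f x - f y| ≤ d * |x - y| := hf x hxIcc y hyIcc
      _ ≤ d * h := by
          rw [abs_of_nonneg hxy1]
          exact mul_le_mul_of_nonneg_left hxy2 (Nat.cast_nonneg d)
  have hs : |sl a b f m0 i| ≤ d := sl_abs_le a b f d hab hf m0 hi
  have hdecomp : f x - (f c + sl a b f m0 i * (x - c))
      = (f x - f y) + (f y - (f c + sl a b f m0 i * (y - c))) - sl a b f m0 i * (x - y) := by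
    ring
  have hslxy : |sl a b f m0 i * (x - y)| ≤ d * h := by
    rw [abs_mul, abs_of_nonneg hxy1]
    apply mul_le_mul hs hxy2 hxy1 (Nat.cast_nonneg d)
  have h2m0 : (b-a)/2^m0 = 2^w * h := by
    rw [hh, pow_add]
    field_simp
  calc |f x - (f c + sl a b f m0 i * (x - c))|
      ≤ |f x - f y| + |f y - (f c + sl a b f m0 i * (y - c))| + |sl a b f m0 i * (x - y)| := by
        rw [hdecomp]
        exact le_trans (abs_sub _ _) (by gcongr; exact abs_add_le _ _)
    _ ≤ d * h + η * (2^w * h) + d * h := by gcongr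
    _ = (η + 2*d/2^w) * (2^w * h) := by
        have h2wne : (2:ℝ)^w ≠ 0 := by positivity
        field_simp
        ring
    _ = (η + 2*d/2^w) * ((b-a)/2^m0) := by rw [h2m0]

end
end S14

set_option maxHeartbeats 2000000 in
open S14 Finset in
/-- for every `d ∈ ℕ` and `ε > 0` there is `τ = τ(ε,d) > 0` such that any
`d`-Lipschitz `f : [a,b] → ℝ` admits a family of non-overlapping subintervals
`[c_j,d_j]` on each of which `f` is `ε`-linear, each of length `≥ τ(b−a)`, leaving at
most length `ε(b−a)` of `[a,b]` uncovered. -/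
theorem stmt14 (d : ℕ) (ε : ℝ) (hε : 0 < ε) :
    ∃ τ : ℝ, 0 < τ ∧
    ∀ (a b : ℝ) (f : ℝ → ℝ), a < b →
      (∀ x ∈ Set.Icc a b, ∀ y ∈ Set.Icc a b, |f x - f y| ≤ (d : ℝ) * |x - y|) →
      ∃ (M : ℕ) (c e : ℕ → ℝ),
        (∀ j < M, a ≤ c j ∧ c j < e j ∧ e j ≤ b) ∧
        (∀ i < M, ∀ j < M, i ≠ j → e i ≤ c j ∨ e j ≤ c i) ∧
        (∀ j < M, ∀ x ∈ Set.Icc (c j) (e j),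
          |f x - (f (c j) + (f (e j) - f (c j)) / (e j - c j) * (x - c j))| ≤
            ε * (e j - c j)) ∧
        (∀ j < M, τ * (b - a) ≤ e j - c j) ∧
        ((b - a) - ∑ j ∈ Finset.range M, (e j - c j) ≤ ε * (b - a)) := by
  classical
  -- choose parameters
  set η : ℝ := ε/2 with hηdef
  have hη : 0 < η := by positivity
  obtain ⟨w', hw'⟩ : ∃ n : ℕ, (4*(d:ℝ)+4)/ε < 2^n := pow_unbounded_of_one_lt _ one_lt_two
  set w : ℕ := w' + 1 with hwdef
  have hw : 1 ≤ w := Nat.le_add_left 1 w'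
  have hwR : (0:ℝ) < w := by exact_mod_cast hw
  have h2w : (0:ℝ) < 2^w := by positivity
  have hdw : 2*(d:ℝ)/2^w ≤ ε/2 := by
    have h2 : 4*(d:ℝ)+4 < ε * 2^w' := by
      rw [div_lt_iff₀ hε] at hw'; linarith [mul_comm ε ((2:ℝ)^w'), hw']
    have h3 : (2:ℝ)^w = 2 * 2^w' := by rw [hwdef, pow_succ]; ring
    rw [div_le_div_iff₀ h2w (by norm_num : (0:ℝ) < 2)]
    have hd0 : (0:ℝ) ≤ d := Nat.cast_nonneg d
    nlinarith
  obtain ⟨W', hW'⟩ : ∃ n : ℕ, ((d:ℝ)^2 * w^2 * 2^w)/(η^2)/ε < n := exists_nat_gt _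
  set W : ℕ := W' + 1 with hWdef
  have hWR : (0:ℝ) < W := by positivity
  have hWbig : ((d:ℝ)^2 * w^2 * 2^w)/(η^2)/ε < W := by
    calc ((d:ℝ)^2 * w^2 * 2^w)/(η^2)/ε < W' := hW'
      _ ≤ W := by exact_mod_cast Nat.le_succ W'
  refine ⟨1/2^(W*w), by positivity, ?_⟩
  intro a b f hab hf
  have hba : (0:ℝ) < b - a := by linarith
  -- pigeonhole: a window with small energy increment
  have hpig : ∃ k < W, en a b f ((k+1)*w) - en a b f (k*w) ≤ (d:ℝ)^2/W := by
    by_contra hcon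
    push_neg at hcon
    have htel : ∑ k ∈ range W, (en a b f ((k+1)*w) - en a b f (k*w))
        = en a b f (W*w) - en a b f (0*w) :=
      Finset.sum_range_sub (fun k => en a b f (k*w)) W
    have hlt : ((d:ℝ)^2) < ∑ k ∈ range W, (en a b f ((k+1)*w) - en a b f (k*w)) := by
      have := Finset.sum_lt_sum_of_nonempty (s := range W)
        (by simp [hWdef]) (f := fun _ => (d:ℝ)^2/W)
        (g := fun k => en a b f ((k+1)*w) - en a b f (k*w))
        (fun k hk => hcon k (mem_range.1 hk))
      rw [sum_const, card_range, nsmul_eq_mul] at this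
      calc ((d:ℝ)^2) = W * ((d:ℝ)^2/W) := by field_simp
        _ < _ := this
    rw [htel] at hlt
    have h1 := en_le a b f d hab hf (W*w)
    have h2 := en_nonneg a b f (0*w)
    linarith
  obtain ⟨k, hkW, hwin⟩ := hpig
  set m0 : ℕ := k*w with hm0
  have h2m0 : (0:ℝ) < 2^m0 := by positivity
  have hwin' : en a b f (m0 + w) - en a b f m0 ≤ (d:ℝ)^2/W := by
    have he : (k+1)*w = m0 + w := by rw [hm0]; ring
    rw [← he]; exact hwin
  -- good and bad intervals
  set G : Finset ℕ := (range (2^m0)).filter (fun i => Good a b f η w m0 i) with hG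
  set B : Finset ℕ := (range (2^m0)).filter (fun i => ¬ Good a b f η w m0 i) with hB
  have hcards : G.card + B.card = 2^m0 := by
    rw [hG, hB, Finset.card_filter_add_card_filter_not, card_range]
  have hbadcard := bad_card a b f hab η hη w m0 hw ((d:ℝ)^2/W) hwin' B
    (Finset.filter_subset _ _) (fun i hi => (Finset.mem_filter.1 hi).2)
  -- bad cardinality bound
  have hBbound : (B.card : ℝ) ≤ ε * 2^m0 := by
    have e1 : (B.card:ℝ) * (η^2/w^2) * W ≤ (d:ℝ)^2 * (2^m0*2^w) := by
      rw [pow_add] at hbadcard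
      have := mul_le_mul_of_nonneg_right hbadcard
        (le_of_lt (by positivity : (0:ℝ) < W * (2^m0*2^w)))
      calc (B.card:ℝ) * (η^2/w^2) * W
          = (B.card:ℝ) * ((η/w)^2 / (2^m0*2^w)) * (W * (2^m0*2^w)) := by
            field_simp
        _ ≤ (d:ℝ)^2/W * (W * (2^m0*2^w)) := this
        _ = (d:ℝ)^2 * (2^m0*2^w) := by field_simp
    have e2 : (d:ℝ)^2*w^2*2^w < η^2*ε*W := by
      rw [div_lt_iff₀ hε, div_lt_iff₀ (by positivity : (0:ℝ) < η^2)] at hWbig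
      nlinarith [hWbig]
    have e1' : (B.card:ℝ)*η^2*W ≤ (d:ℝ)^2*w^2*2^w*2^m0 := by
      have h := mul_le_mul_of_nonneg_right e1 (le_of_lt (by positivity : (0:ℝ) < w^2))
      calc (B.card:ℝ)*η^2*W = (B.card:ℝ)*(η^2/w^2)*W * w^2 := by field_simp
        _ ≤ (d:ℝ)^2*(2^m0*2^w)*w^2 := h
        _ = (d:ℝ)^2*w^2*2^w*2^m0 := by ring
    have e2' : (d:ℝ)^2*w^2*2^w*2^m0 < η^2*ε*W*2^m0 := by
      exact mul_lt_mul_of_pos_right e2 h2m0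
    have hpos : (0:ℝ) < η^2*W := by positivity
    have e3 : (B.card:ℝ)*(η^2*W) < (ε*2^m0)*(η^2*W) := by nlinarith [e1', e2']
    exact le_of_lt (lt_of_mul_lt_mul_right e3 hpos.le)
  -- enumeration of good intervals
  set M : ℕ := G.card with hM
  set emb := G.orderEmbOfFin hM.symm with hemb
  set idx : ℕ → ℕ := fun j => if h : j < M then emb ⟨j, h⟩ else 0 with hidx
  have hidxG : ∀ j, j < M → idx j ∈ G := by
    intro j hj
    rw [hidx]; dsimp only; rw [dif_pos hj]
    exact Finset.orderEmbOfFin_mem G hM.symm _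
  have hidxlt : ∀ j, j < M → idx j < 2^m0 := by
    intro j hj
    have := hidxG j hj
    rw [hG] at this
    exact mem_range.1 (Finset.mem_filter.1 this).1
  have hidxmono : ∀ i j, i < M → j < M → i < j → idx i < idx j := by
    intro i j hi hj hij
    rw [hidx]; dsimp only; rw [dif_pos hi, dif_pos hj]
    exact emb.strictMono (show (⟨i,hi⟩ : Fin M) < ⟨j,hj⟩ from hij)
  clear_value idx
  clear hidx
  clear_value emb
  clear hemb
  have hptd : ∀ n : ℕ, pt a b m0 (n+1) - pt a b m0 n = (b-a)/2^m0 := by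
    intro n
    simp only [pt]
    push_cast
    ring
  refine ⟨M, fun j => pt a b m0 (idx j), fun j => pt a b m0 (idx j + 1), ?_, ?_, ?_, ?_, ?_⟩
  · -- inside [a,b]
    intro j hj
    have h1 := hidxlt j hj
    refine ⟨(pt_mem a b hab.le m0 h1.le).1, pt_strict_mono a b hab m0 (Nat.lt_succ_self _),
      (pt_mem a b hab.le m0 (show idx j + 1 ≤ 2^m0 from h1)).2⟩
  · -- non-overlapping
    intro i hi j hj hij
    rcases Nat.lt_or_ge i j with h | h
    · left
      exact pt_mono a b hab.le m0 (hidxmono i j hi hj h)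
    · right
      have : j < i := by omega
      exact pt_mono a b hab.le m0 (hidxmono j i hj hi this)
  · -- ε-linearity
    intro j hj x hx
    have hGood : Good a b f η w m0 (idx j) := (Finset.mem_filter.1 (hidxG j hj)).2
    have hilt := hidxlt j hj
    have hlin := good_linear a b f d hab hf η hη.le w m0 (idx j) hilt hGood x hx
    have hdiffpt := hptd (idx j)
    have hslope : (f (pt a b m0 (idx j+1)) - f (pt a b m0 (idx j)))
        / (pt a b m0 (idx j+1) - pt a b m0 (idx j)) = sl a b f m0 (idx j) := by
      rw [diff_eq a b f hab, hdiffpt]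
      exact mul_div_cancel_right₀ _ (by positivity)
    have hfac : η + 2*(d:ℝ)/2^w ≤ ε := by rw [hηdef]; linarith [hdw]
    have hnn : (0:ℝ) ≤ (b-a)/2^m0 := by positivity
    dsimp only
    rw [hslope, hdiffpt]
    exact le_trans hlin (mul_le_mul_of_nonneg_right hfac hnn)
  · -- length lower bound
    intro j hj
    dsimp only
    rw [hptd (idx j)]
    have hm0le : m0 ≤ W*w := by
      rw [hm0]
      exact mul_le_mul_left hkW.le w
    have h2 : (2:ℝ)^m0 ≤ 2^(W*w) := pow_le_pow_right₀ one_le_two hm0le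
    rw [one_div, inv_mul_eq_div]
    gcongr
  · -- total length
    have hsum : ∑ j ∈ Finset.range M, (pt a b m0 (idx j + 1) - pt a b m0 (idx j))
        = M * ((b-a)/2^m0) := by
      rw [Finset.sum_congr rfl (fun j _ => hptd (idx j)), sum_const, card_range, nsmul_eq_mul]
    dsimp only
    rw [hsum]
    have hMc : (M:ℝ) + B.card = 2^m0 := by exact_mod_cast hcards
    have heq : b - a - M * ((b-a)/2^m0) = (B.card:ℝ) * ((b-a)/2^m0) := by
      have hM' : (M:ℝ) = 2^m0 - B.card := by linarith
      rw [hM']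
      field_simp
      ring
    rw [heq]
    calc (B.card:ℝ) * ((b-a)/2^m0) ≤ (ε*2^m0) * ((b-a)/2^m0) := by
          apply mul_le_mul_of_nonneg_right hBbound (by positivity)
      _ = ε * (b-a) := by field_simp
end

section
/- For every d ∈ ℕ and ε > 0 there is τ = τ(d,ε) > 0 such that: for any non-decreasing d-Lipschitz function f : [0,m] → ℝ with f(0) = 0 there exist sequences 0 = a₀ < a₁ < ... < a_n ≤ m and 0 ≤ σ₀ < σ₁ < ... < σ_{n−1} ≤ d such that (i) a_{j+1} − a_j ≥ τm for all j; (ii) f(x) ≥ f(a_j) + σ_j (x − a_j) for all x ∈ [a_j, a_{j+1}] and each j; (iii) Σ_{j=0}^{n−1} (a_{j+1} − a_j) σ_j ≥ f(m) − εm. -/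
private lemma gaps_mono {A : ℕ → ℝ} {c : ℝ} (hc : 0 ≤ c) {n : ℕ}
    (h : ∀ j < n, c ≤ A (j+1) - A j) :
    ∀ j k, j ≤ k → k ≤ n → A j ≤ A k := by
  intro j k hjk hkn
  induction k with
  | zero =>
    have : j = 0 := Nat.le_zero.mp hjk
    simp [this]
  | succ k ih =>
    rcases Nat.eq_or_lt_of_le hjk with rfl | hlt
    · exact le_rfl
    · have h1 : A j ≤ A k := ih (Nat.lt_succ_iff.mp hlt) (le_trans (Nat.le_succ k) hkn)
      have h2 := h k (Nat.lt_of_lt_of_le (Nat.lt_succ_self k) hkn)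
      linarith

set_option maxHeartbeats 1000000 in
private lemma claim (d : ℕ) (hd : 1 ≤ d) (δ τ m : ℝ) (hδ : 0 < δ) (hτ : 0 < τ) (hm : 0 < m)
    (f : ℝ → ℝ) (hmono : MonotoneOn f (Set.Icc 0 m))
    (hlip : ∀ x ∈ Set.Icc (0:ℝ) m, ∀ y ∈ Set.Icc (0:ℝ) m, |f x - f y| ≤ (d:ℝ) * |x - y|)
    (K : ℕ) (hK : (d:ℝ) ≤ K * δ) (hK' : ∀ k : ℕ, k < K → (k:ℝ) * δ < d) :
    ∀ t : ℕ, t ≤ K → ∀ a : ℝ, 0 ≤ a → a ≤ m →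
      (∀ x ∈ Set.Icc a m, f a + min (((K - t : ℕ) : ℝ) * δ) (d:ℝ) * (x - a) ≤ f x) →
      ∃ (b : ℝ) (n : ℕ) (A σ : ℕ → ℝ),
        A 0 = b ∧ a ≤ b ∧ b ≤ a + t * (τ * m) ∧ b ≤ m ∧ A n ≤ m ∧
        (∀ j < n, τ * m ≤ A (j+1) - A j) ∧
        (∀ j, j + 1 < n → σ j < σ (j+1)) ∧
        (∀ j < n, min (((K - t : ℕ) : ℝ) * δ) (d:ℝ) ≤ σ j) ∧
        (∀ j < n, σ j ≤ (d:ℝ)) ∧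
        (∀ j < n, ∀ x ∈ Set.Icc (A j) (A (j+1)), f (A j) + σ j * (x - A j) ≤ f x) ∧
        f m - f b - δ * (m - b) - d * ((t:ℝ)+1)^2 * (τ * m) ≤
          ∑ j ∈ Finset.range n, (A (j+1) - A j) * σ j := by
  have hd0 : (0:ℝ) < (d:ℝ) := by exact_mod_cast Nat.pos_of_ne_zero (by omega)
  have hτm : 0 < τ * m := mul_pos hτ hm
  have hlip2 : ∀ x y : ℝ, 0 ≤ x → x ≤ y → y ≤ m → f y - f x ≤ (d:ℝ) * (y - x) := by
    intro x y hx hxy hym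
    have h1 := hlip y ⟨le_trans hx hxy, hym⟩ x ⟨hx, le_trans hxy hym⟩
    have h3 : f y - f x ≤ |f y - f x| := le_abs_self _
    rw [abs_of_nonneg (by linarith : (0:ℝ) ≤ y - x)] at h1
    linarith
  intro t
  induction t with
  | zero =>
    intro _ a ha0 ham hgood
    have hmin : min (((K - 0 : ℕ) : ℝ) * δ) (d:ℝ) = (d:ℝ) := by
      simp only [Nat.sub_zero]
      exact min_eq_right hK
    rw [hmin] at hgood
    have hfm : f m - f a ≤ (d:ℝ) * (m - a) := hlip2 a m ha0 ham le_rfl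
    have hpos : (0:ℝ) ≤ δ * (m - a) := by
      have : (0:ℝ) ≤ m - a := by linarith
      positivity
    by_cases hcase : τ * m ≤ m - a
    · refine ⟨a, 1, (fun j => if j = 0 then a else m), (fun _ => (d:ℝ)), by simp, le_rfl,
        by simp, ham, by simp, ?_, ?_, ?_, ?_, ?_, ?_⟩
      · intro j hj
        interval_cases j
        simpa using hcase
      · intro j hj; omega
      · intro j hj; rw [hmin]
      · intro j hj; exact le_rfl
      · intro j hj
        interval_cases j
        intro x hx
        simp only [if_pos rfl, if_neg (Nat.one_ne_zero)] at hx ⊢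
        exact hgood x hx
      · simp only [Finset.sum_range_one, if_pos rfl, if_neg (Nat.one_ne_zero)]
        push_cast
        nlinarith [hτm.le]
    · refine ⟨a, 0, (fun _ => a), (fun _ => 0), rfl, le_rfl, by simp, ham, ham,
        by intro j hj; exact absurd hj (Nat.not_lt_zero j),
        by intro j hj; exact absurd hj (by omega),
        by intro j hj; exact absurd hj (Nat.not_lt_zero j),
        by intro j hj; exact absurd hj (Nat.not_lt_zero j),
        by intro j hj; exact absurd hj (Nat.not_lt_zero j), ?_⟩
      simp only [Finset.sum_range_zero]
      push_neg at hcase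
      push_cast
      nlinarith [mul_lt_mul_of_pos_left hcase hd0]
  | succ t ih =>
    intro htK a ha0 ham hgood
    have ht1 : ((t:ℝ)+1)^2 ≤ (((t:ℝ)+1)+1)^2 := by nlinarith [(Nat.cast_nonneg t : (0:ℝ) ≤ t)]
    have hE : (d:ℝ)*((t:ℝ)+1)^2*(τ*m) ≤ (d:ℝ)*(((t:ℝ)+1)+1)^2*(τ*m) :=
      mul_le_mul_of_nonneg_right (mul_le_mul_of_nonneg_left ht1 hd0.le) hτm.le
    set k : ℕ := K - (t+1) with hkdef
    have hkK : k < K := by omega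
    have hkk : K - t = k + 1 := by omega
    have hsval : min (((K - (t+1) : ℕ) : ℝ) * δ) (d:ℝ) = (k:ℝ) * δ := by
      rw [← hkdef]
      exact min_eq_left (hK' k hkK).le
    set s : ℝ := (k:ℝ) * δ with hsdef
    have hs0 : 0 ≤ s := by positivity
    have hsd : s < d := hK' k hkK
    rw [hsval] at hgood
    set L' : ℝ := min (((k:ℝ)+1) * δ) (d:ℝ) with hL'def
    have hcast : (((K - t : ℕ) : ℝ)) * δ = ((k:ℝ)+1) * δ := by
      rw [hkk]; push_cast; ring
    have hminL' : min (((K - t : ℕ) : ℝ) * δ) (d:ℝ) = L' := by rw [hcast]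
    have hL'pos : 0 ≤ L' := le_min (by positivity) hd0.le
    have hL'le : L' ≤ s + δ := le_trans (min_le_left _ _) (by rw [hsdef]; ring_nf; exact le_rfl)
    have hsL' : s < L' := lt_min (by nlinarith) hsd
    set S : Set ℝ := {x : ℝ | (x ∈ Set.Ioc a m) ∧ f x < f a + L' * (x - a)} with hSdef
    by_cases hS : S.Nonempty
    · -- there is a point below the L' line; z = sup of those
      have hbdd : BddAbove S := ⟨m, fun x hx => hx.1.2⟩
      set z : ℝ := sSup S with hzdef
      have hza : a < z := by
        obtain ⟨x, hx⟩ := hS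
        exact lt_of_lt_of_le hx.1.1 (le_csSup hbdd hx)
      have hzm : z ≤ m := csSup_le hS (fun x hx => hx.1.2)
      have hz0 : 0 ≤ z := le_trans ha0 hza.le
      have hfz : f z ≤ f a + L' * (z - a) := by
        refine le_of_forall_pos_le_add ?_
        intro η hη
        have hd1 : (0:ℝ) < (d:ℝ) + 1 := by positivity
        set η' : ℝ := η / ((d:ℝ)+1) with hη'def
        have hη' : 0 < η' := by positivity
        obtain ⟨x, hxS, hxgt⟩ := exists_lt_of_lt_csSup hS (by linarith : z - η' < z)
        have hxz : x ≤ z := le_csSup hbdd hxS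
        have h1 : f z - f x ≤ (d:ℝ) * (z - x) := hlip2 x z (le_trans ha0 hxS.1.1.le) hxz hzm
        have h2 : f x < f a + L' * (x - a) := hxS.2
        have h3 : L' * (x - a) ≤ L' * (z - a) :=
          mul_le_mul_of_nonneg_left (by linarith) hL'pos
        have h4 : (d:ℝ) * (z - x) ≤ (d:ℝ) * η' :=
          mul_le_mul_of_nonneg_left (by linarith) hd0.le
        have h5 : (d:ℝ) * η' ≤ η := by
          rw [hη'def, mul_div_assoc', div_le_iff₀ hd1]
          nlinarith
        linarith
      have hzgood : ∀ x ∈ Set.Icc z m, f z + L' * (x - z) ≤ f x := by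
        intro x hx
        rcases eq_or_lt_of_le hx.1 with rfl | hzx
        · simp
        · have hxnS : x ∉ S := fun hmem => absurd (le_csSup hbdd hmem) (not_le.mpr hzx)
          have hxIoc : x ∈ Set.Ioc a m := ⟨lt_trans hza hzx, hx.2⟩
          have hge : ¬ (f x < f a + L' * (x - a)) := fun hc => hxnS ⟨hxIoc, hc⟩
          push_neg at hge
          nlinarith
      have hzgood' : ∀ x ∈ Set.Icc z m,
          f z + min (((K - t : ℕ) : ℝ) * δ) (d:ℝ) * (x - z) ≤ f x := by
        rw [hminL']; exact hzgood
      obtain ⟨b', n', A', σ', hA0', hzb', hb'z, hb'm, hAn', hgap', hstrict', hσlo', hσhi',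
        hsuper', hsum'⟩ := ih (by omega) z hz0 hzm hzgood'
      rw [hminL'] at hσlo'
      by_cases hcl : τ * m ≤ z - a
      · -- emit interval [a, b'] with slope s
        refine ⟨a, n' + 1, (fun j => if j = 0 then a else A' (j - 1)),
          (fun j => if j = 0 then s else σ' (j - 1)), by simp, le_rfl,
          by push_cast; nlinarith [hτm.le, (Nat.cast_nonneg t : (0:ℝ) ≤ t)], ham,
          by exact hAn', ?_, ?_, ?_, ?_, ?_, ?_⟩
        · intro j hj
          cases j with
          | zero =>
            have h0 : τ * m ≤ A' 0 - a := by rw [hA0']; linarith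
            exact h0
          | succ i => exact hgap' i (by omega)
        · intro j hj
          cases j with
          | zero => exact lt_of_lt_of_le hsL' (hσlo' 0 (by omega))
          | succ i => exact hstrict' i (by omega)
        · intro j hj
          cases j with
          | zero => exact le_of_eq hsval
          | succ i =>
            exact le_trans (le_of_eq hsval) (le_trans hsL'.le (hσlo' i (by omega)))
        · intro j hj
          cases j with
          | zero => exact hsd.le
          | succ i => exact hσhi' i (by omega)
        · intro j hj
          cases j with
          | zero =>
            intro x hx
            have hx2 : x ≤ A' 0 := hx.2
            rw [hA0'] at hx2
            have hx1 : a ≤ x := hx.1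
            exact hgood x ⟨hx1, le_trans hx2 hb'm⟩
          | succ i =>
            intro x hx
            exact hsuper' i (by omega) x hx
        · have hkey : ∑ j ∈ Finset.range (n'+1),
              ((if j+1 = 0 then a else A' (j+1-1)) - (if j = 0 then a else A' (j-1))) *
                (if j = 0 then s else σ' (j-1))
              = (∑ j ∈ Finset.range n', (A' (j+1) - A' j) * σ' j) + (b' - a) * s := by
            rw [Finset.sum_range_succ']
            simp [hA0']
          have hgoal : f m - f a - δ * (m - a) - (d:ℝ) * (((t+1 : ℕ):ℝ)+1)^2 * (τ * m) ≤
              (∑ j ∈ Finset.range n', (A' (j+1) - A' j) * σ' j) + (b' - a) * s := by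
            have hfb' : f b' - f z ≤ (d:ℝ) * (b' - z) := hlip2 z b' hz0 hzb' hb'm
            have e1 : L' * (z-a) ≤ (s+δ)*(z-a) :=
              mul_le_mul_of_nonneg_right hL'le (by linarith)
            have e2 : (s+δ)*(z-a) ≤ (s+δ)*(b'-a) :=
              mul_le_mul_of_nonneg_left (by linarith) (by linarith)
            have e3 : (d:ℝ)*(b'-z) ≤ (d:ℝ)*((t:ℝ)*(τ*m)) := by
              apply mul_le_mul_of_nonneg_left ?_ hd0.le
              push_cast at hb'z
              linarith
            push_cast
            nlinarith [hsum', hfz, hfb', e1, e2, e3, hτm.le,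
              mul_nonneg hd0.le hτm.le,
              mul_nonneg (mul_nonneg hd0.le (Nat.cast_nonneg t : (0:ℝ) ≤ t)) hτm.le]
          calc f m - f a - δ * (m - a) - (d:ℝ) * (((t+1 : ℕ):ℝ)+1)^2 * (τ * m)
              ≤ (∑ j ∈ Finset.range n', (A' (j+1) - A' j) * σ' j) + (b' - a) * s := hgoal
            _ = ∑ j ∈ Finset.range (n'+1),
                ((if j+1 = 0 then a else A' (j+1-1)) - (if j = 0 then a else A' (j-1))) *
                  (if j = 0 then s else σ' (j-1)) := hkey.symm
      · -- cluster : skip a, return the sequence from z unchanged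
        push_neg at hcl
        refine ⟨b', n', A', σ', hA0', by linarith, by push_cast; push_cast at hb'z; linarith,
          hb'm, hAn', hgap', hstrict', ?_, hσhi', hsuper', ?_⟩
        · intro j hj
          refine le_trans ?_ (hσlo' j hj)
          rw [hsval]
          exact hsL'.le
        · push_cast
          push_cast at hsum'
          linarith [hE]
    · -- S empty : a itself is L'-good, recurse at a
      have hgood' : ∀ x ∈ Set.Icc a m,
          f a + min (((K - t : ℕ) : ℝ) * δ) (d:ℝ) * (x - a) ≤ f x := by
        rw [hminL']
        intro x hx
        rcases eq_or_lt_of_le hx.1 with rfl | hax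
        · simp
        · by_contra hcon
          push_neg at hcon
          exact hS ⟨x, ⟨⟨hax, hx.2⟩, hcon⟩⟩
      obtain ⟨b, n, A, σ, hA0, hab, hba, hbm, hAn, hgap, hstrict, hσlo, hσhi, hsuper, hsum⟩ :=
        ih (by omega) a ha0 ham hgood'
      rw [hminL'] at hσlo
      refine ⟨b, n, A, σ, hA0, hab, by push_cast; push_cast at hba; linarith [hτm.le], hbm, hAn,
        hgap, hstrict, ?_, hσhi, hsuper, ?_⟩
      · intro j hj
        refine le_trans ?_ (hσlo j hj)
        rw [hsval]
        exact hsL'.le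
      · push_cast
        push_cast at hsum
        linarith [hE]


set_option maxHeartbeats 1000000 in
/-- for every `d ∈ ℕ`, `ε > 0` there is `τ(d,ε) > 0` such that every
non-decreasing `d`-Lipschitz `f : [0,m] → ℝ` with `f(0)=0` admits
`0 = a₀ < a₁ < ⋯ < a_n ≤ m` and `0 ≤ σ₀ < ⋯ < σ_{n−1} ≤ d` with:
`a_{j+1} − a_j ≥ τm`; `f` is `(σ_j,0)`-superlinear on `[a_j,a_{j+1}]`; and
`Σ (a_{j+1}−a_j)σ_j ≥ f(m) − εm`. -/
theorem stmt17 (d : ℕ) (hd : 1 ≤ d) (ε : ℝ) (hε : 0 < ε) :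
    ∃ τ : ℝ, 0 < τ ∧
    ∀ (m : ℝ) (f : ℝ → ℝ), 0 < m →
      MonotoneOn f (Set.Icc 0 m) →
      (∀ x ∈ Set.Icc (0:ℝ) m, ∀ y ∈ Set.Icc (0:ℝ) m, |f x - f y| ≤ (d : ℝ) * |x - y|) →
      f 0 = 0 →
      ∃ (n : ℕ) (a σ : ℕ → ℝ),
        a 0 = 0 ∧ a n ≤ m ∧
        (∀ j < n, a j < a (j + 1)) ∧
        (∀ j < n, 0 ≤ σ j) ∧
        (∀ j < n, σ j ≤ (d : ℝ)) ∧
        (∀ j, j + 1 < n → σ j < σ (j + 1)) ∧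
        (∀ j < n, τ * m ≤ a (j + 1) - a j) ∧
        (∀ j < n, ∀ x ∈ Set.Icc (a j) (a (j + 1)), f (a j) + σ j * (x - a j) ≤ f x) ∧
        (f m - ε * m ≤ ∑ j ∈ Finset.range n, (a (j + 1) - a j) * σ j) := by
  have hd0 : (0:ℝ) < (d:ℝ) := by exact_mod_cast Nat.pos_of_ne_zero (by omega)
  set δ : ℝ := ε/2 with hδdef
  have hδ : 0 < δ := by positivity
  set K : ℕ := ⌈(d:ℝ)/δ⌉₊ with hKdef
  have hK : (d:ℝ) ≤ K*δ := by
    have h1 : (d:ℝ)/δ ≤ K := Nat.le_ceil _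
    calc (d:ℝ) = ((d:ℝ)/δ)*δ := by field_simp
      _ ≤ K*δ := mul_le_mul_of_nonneg_right h1 hδ.le
  have hK' : ∀ k:ℕ, k < K → (k:ℝ)*δ < d := by
    intro k hk
    have h1 : (k:ℝ) < (d:ℝ)/δ := Nat.lt_ceil.mp hk
    calc (k:ℝ)*δ < ((d:ℝ)/δ)*δ := mul_lt_mul_of_pos_right h1 hδ
      _ = d := by field_simp
  set τ : ℝ := min 1 (ε / (2*(d:ℝ)*((K:ℝ)+1)*((K:ℝ)+2))) with hτdef
  have hτ : 0 < τ := lt_min one_pos (by positivity)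
  have hτ1 : τ ≤ 1 := min_le_left _ _
  have hτe : τ ≤ ε / (2*(d:ℝ)*((K:ℝ)+1)*((K:ℝ)+2)) := min_le_right _ _
  refine ⟨τ, hτ, ?_⟩
  intro m f hm hmono hlip hf0
  have hτm : 0 < τ*m := mul_pos hτ hm
  have hcm : τ*m ≤ m := by nlinarith
  have hfnn : ∀ x ∈ Set.Icc (0:ℝ) m, 0 ≤ f x := by
    intro x hx
    have := hmono ⟨le_rfl, hm.le⟩ hx hx.1
    rw [hf0] at this
    exact this
  have hgood0 : ∀ x ∈ Set.Icc (τ*m) m,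
      f (τ*m) + min (((K - K : ℕ) : ℝ) * δ) (d:ℝ) * (x - (τ*m)) ≤ f x := by
    intro x hx
    have hmin : min (((K - K : ℕ) : ℝ) * δ) (d:ℝ) = 0 := by
      simp
    rw [hmin]
    have := hmono ⟨hτm.le, hcm⟩ ⟨le_trans hτm.le hx.1, hx.2⟩ hx.1
    linarith
  obtain ⟨b, n', A', σ', hA0', hcb, hbc, hbm, hAn', hgap', hstrict', hσlo', hσhi',
    hsuper', hsum'⟩ :=
    claim d hd δ τ m hδ hτ hm f hmono hlip K hK hK' K le_rfl (τ*m) hτm.le hcm hgood0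
  have hσ0' : ∀ j < n', 0 ≤ σ' j := by
    intro j hj
    refine le_trans (le_min (by positivity) hd0.le) (hσlo' j hj)
  have hb0 : 0 ≤ b := le_trans hτm.le hcb
  have hfb : f b ≤ (d:ℝ)*b := by
    have h1 := hlip b ⟨hb0, hbm⟩ 0 ⟨le_rfl, hm.le⟩
    rw [hf0, sub_zero, sub_zero, abs_of_nonneg hb0] at h1
    exact le_trans (le_abs_self _) h1
  -- main arithmetic : f m - ε m ≤ Σ'
  have hfinal : f m - ε*m ≤ ∑ j ∈ Finset.range n', (A' (j+1) - A' j) * σ' j := by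
    have hB : (0:ℝ) < 2*(d:ℝ)*((K:ℝ)+1)*((K:ℝ)+2) := by positivity
    have h4 : τ*(2*(d:ℝ)*((K:ℝ)+1)*((K:ℝ)+2)) ≤ ε := (le_div_iff₀ hB).mp hτe
    have h5 : τ*(2*(d:ℝ)*((K:ℝ)+1)*((K:ℝ)+2))*m ≤ ε*m := mul_le_mul_of_nonneg_right h4 hm.le
    have h1 : f b ≤ (d:ℝ)*(((K:ℝ)+1)*(τ*m)) := by
      refine le_trans hfb (mul_le_mul_of_nonneg_left ?_ hd0.le)
      push_cast at hbc
      linarith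
    have hδb : δ*(m-b) ≤ δ*m := by nlinarith
    have h6 : (d:ℝ)*(((K:ℝ)+1)*(τ*m)) + (d:ℝ)*((K:ℝ)+1)^2*(τ*m) = τ*(2*(d:ℝ)*((K:ℝ)+1)*((K:ℝ)+2))*m/2 := by
      ring
    have hδm : δ*m = ε*m/2 := by rw [hδdef]; ring
    linarith [hsum', h1, hδb, h5, h6, hδm]
  rcases Nat.eq_zero_or_pos n' with rfl | hn'
  · refine ⟨0, fun _ => 0, fun _ => 0, rfl, hm.le,
      fun j hj => absurd hj (Nat.not_lt_zero j), fun j hj => absurd hj (Nat.not_lt_zero j),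
      fun j hj => absurd hj (Nat.not_lt_zero j), fun j hj => absurd hj (by omega),
      fun j hj => absurd hj (Nat.not_lt_zero j), fun j hj => absurd hj (Nat.not_lt_zero j), ?_⟩
    simpa using hfinal
  · have hA'1m : ∀ i ≤ n', A' i ≤ m := by
      intro i hi
      exact le_trans (gaps_mono hτm.le hgap' i n' hi le_rfl) hAn'
    by_cases hσp : σ' 0 ≤ 0
    · -- first slope is 0 : extend first interval to start at 0
      have hs00 : σ' 0 = 0 := le_antisymm hσp (hσ0' 0 hn')
      refine ⟨n', (fun j => if j = 0 then 0 else A' j), σ', by simp, ?_, ?_, hσ0', hσhi',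
        hstrict', ?_, ?_, ?_⟩
      · show (if n' = 0 then (0:ℝ) else A' n') ≤ m
        rw [if_neg hn'.ne']
        exact hAn'
      · intro j hj
        cases j with
        | zero =>
          have hg := hgap' 0 hn'
          rw [hA0'] at hg
          have h0 : (0:ℝ) < A' 1 := by linarith
          exact h0
        | succ i =>
          have hg := hgap' (i+1) hj
          have h0 : A' (i+1) < A' (i+1+1) := by linarith
          exact h0
      · intro j hj
        cases j with
        | zero =>
          have hg := hgap' 0 hn'
          rw [hA0'] at hg
          have h0 : τ*m ≤ A' 1 - 0 := by linarith
          exact h0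
        | succ i =>
          exact hgap' (i+1) hj
      · intro j hj x hx
        cases j with
        | zero =>
          have hx1 : (0:ℝ) ≤ x := hx.1
          have hx2 : x ≤ A' 1 := hx.2
          have hgoal : f 0 + σ' 0 * (x - 0) ≤ f x := by
            rw [hf0, hs00]
            have := hfnn x ⟨hx1, le_trans hx2 (hA'1m 1 hn')⟩
            linarith
          exact hgoal
        | succ i =>
          exact hsuper' (i+1) hj x hx
      · have hsums : ∑ j ∈ Finset.range n',
            ((if j+1 = 0 then (0:ℝ) else A' (j+1)) - (if j = 0 then 0 else A' j)) * σ' j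
            = ∑ j ∈ Finset.range n', (A' (j+1) - A' j) * σ' j := by
          apply Finset.sum_congr rfl
          intro i _
          by_cases h : i = 0
          · subst h; simp [hs00]
          · simp [h]
        calc f m - ε*m ≤ ∑ j ∈ Finset.range n', (A' (j+1) - A' j) * σ' j := hfinal
          _ = ∑ j ∈ Finset.range n',
              ((if j+1 = 0 then (0:ℝ) else A' (j+1)) - (if j = 0 then 0 else A' j)) * σ' j :=
            hsums.symm
    · -- first slope positive : prepend an interval [0, b] with slope 0
      push_neg at hσp
      refine ⟨n'+1, (fun j => if j = 0 then 0 else A' (j-1)),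
        (fun j => if j = 0 then 0 else σ' (j-1)), by simp, by exact hAn', ?_, ?_, ?_, ?_, ?_,
        ?_, ?_⟩
      · intro j hj
        cases j with
        | zero =>
          have : (0:ℝ) < b := lt_of_lt_of_le hτm hcb
          rw [← hA0'] at this
          exact this
        | succ i =>
          have hg := hgap' i (by omega)
          have : A' i < A' (i+1) := by linarith
          exact this
      · intro j hj
        cases j with
        | zero => exact le_rfl
        | succ i => exact hσ0' i (by omega)
      · intro j hj
        cases j with
        | zero => exact hd0.le
        | succ i => exact hσhi' i (by omega)
      · intro j hj
        cases j with
        | zero => exact hσp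
        | succ i => exact hstrict' i (by omega)
      · intro j hj
        cases j with
        | zero =>
          have : τ*m ≤ A' 0 - 0 := by rw [hA0']; linarith
          exact this
        | succ i => exact hgap' i (by omega)
      · intro j hj x hx
        cases j with
        | zero =>
          have hx2 : x ≤ A' 0 := hx.2
          rw [hA0'] at hx2
          have hx1 : (0:ℝ) ≤ x := hx.1
          have hgoal : f 0 + 0 * (x - 0) ≤ f x := by
            rw [hf0]
            have := hfnn x ⟨hx1, le_trans hx2 hbm⟩
            linarith
          exact hgoal
        | succ i =>
          exact hsuper' i (by omega) x hx
      · have hkey : ∑ j ∈ Finset.range (n'+1),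
            ((if j+1 = 0 then (0:ℝ) else A' (j+1-1)) - (if j = 0 then 0 else A' (j-1))) *
              (if j = 0 then (0:ℝ) else σ' (j-1))
            = ∑ j ∈ Finset.range n', (A' (j+1) - A' j) * σ' j := by
          rw [Finset.sum_range_succ']
          simp
        calc f m - ε*m ≤ ∑ j ∈ Finset.range n', (A' (j+1) - A' j) * σ' j := hfinal
          _ = ∑ j ∈ Finset.range (n'+1),
              ((if j+1 = 0 then (0:ℝ) else A' (j+1-1)) - (if j = 0 then 0 else A' (j-1))) *
                (if j = 0 then (0:ℝ) else σ' (j-1)) := hkey.symm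
end

section
/- Let A, B₁, ..., B_n ⊂ ℝ be finite sets and δ > 0. Assume |A + B_i|_δ ≤ K_i |A|_δ for all i = 1,...,n. Then there is a subset A' ⊂ A with |A'|_δ ≥ |A|_δ/2 such that |A' + B₁ + ... + B_n|_δ ≲_n K₁ ⋯ K_n · |A|_δ. -/
open Pointwise
open Finset

namespace Stmt19

noncomputable def phi (δ : ℝ) (X : Set ℝ) : Set ℤ := (fun x : ℝ => ⌊x / δ⌋) '' X

lemma cov1_eq {δ : ℝ} (hδ : 0 < δ) (X : Set ℝ) : cov1 δ X = (phi δ X).ncard := by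
  unfold cov1 phi
  congr 1
  ext k
  simp only [Set.mem_setOf_eq, Set.mem_image]
  constructor
  · rintro ⟨x, hx, h1, h2⟩
    refine ⟨x, hx, ?_⟩
    rw [Int.floor_eq_iff]
    constructor
    · rw [le_div_iff₀ hδ]; exact h1
    · rw [div_lt_iff₀ hδ]; push_cast; exact h2
  · rintro ⟨x, hx, rfl⟩
    refine ⟨x, hx, ?_, ?_⟩
    · rw [← le_div_iff₀ hδ]; exact Int.floor_le _
    · rw [← div_lt_iff₀ hδ]; push_cast; exact Int.lt_floor_add_one _

lemma floor_pair {δ : ℝ} (hδ : 0 < δ) (x y : ℝ) :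
    ∃ e : ℤ, 0 ≤ e ∧ e ≤ 1 ∧ ⌊(x + y) / δ⌋ = ⌊x / δ⌋ + ⌊y / δ⌋ + e := by
  refine ⟨⌊(x + y) / δ⌋ - ⌊x / δ⌋ - ⌊y / δ⌋, ?_, ?_, by ring⟩
  · have h : ((⌊x / δ⌋ + ⌊y / δ⌋ : ℤ) : ℝ) ≤ (x + y) / δ := by
      push_cast
      rw [add_div]
      exact add_le_add (Int.floor_le _) (Int.floor_le _)
    have := Int.le_floor.2 h
    omega
  · have hx := Int.lt_floor_add_one (x / δ)
    have hy := Int.lt_floor_add_one (y / δ)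
    have h : (x + y) / δ < ((⌊x / δ⌋ + ⌊y / δ⌋ + 2 : ℤ) : ℝ) := by
      push_cast
      rw [add_div]
      linarith
    have := Int.floor_lt.2 h
    omega

lemma phi_add_phi_subset {δ : ℝ} (hδ : 0 < δ) (X Y : Set ℝ) :
    phi δ X + phi δ Y ⊆ phi δ (X + Y) + Set.Icc (-1 : ℤ) 0 := by
  rintro k hk
  rw [Set.mem_add] at hk
  obtain ⟨a, ha, b, hb, rfl⟩ := hk
  obtain ⟨x, hx, rfl⟩ := ha
  obtain ⟨y, hy, rfl⟩ := hb
  obtain ⟨e, he0, he1, hfe⟩ := floor_pair hδ x y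
  rw [Set.mem_add]
  refine ⟨⌊(x + y) / δ⌋, ⟨x + y, Set.add_mem_add hx hy, rfl⟩, -e, ?_,
    show ⌊(x + y) / δ⌋ + -e = ⌊x / δ⌋ + ⌊y / δ⌋ by omega⟩
  simp only [Set.mem_Icc]
  omega

lemma phi_add_sum_subset {δ : ℝ} (hδ : 0 < δ) (X : Set ℝ) {n : ℕ} (g : Fin n → Set ℝ)
    (s : Finset (Fin n)) :
    phi δ (X + ∑ i ∈ s, g i) ⊆ phi δ X + (∑ i ∈ s, phi δ (g i)) + Set.Icc (0 : ℤ) s.card := by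
  induction s using Finset.induction with
  | empty =>
    intro k hk
    rw [Finset.sum_empty, add_zero] at hk
    rw [Finset.sum_empty, Finset.card_empty]
    have : k = k + 0 + 0 := by ring
    rw [this]
    exact Set.add_mem_add (Set.add_mem_add hk (by exact Set.zero_mem_zero)) (by simp)
  | @insert j s hj ih =>
    intro k hk
    have hre : X + ∑ i ∈ insert j s, g i = (X + ∑ i ∈ s, g i) + g j := by
      rw [Finset.sum_insert hj, add_comm (g j) (∑ i ∈ s, g i), ← add_assoc]
    rw [hre] at hk
    obtain ⟨z, hz, hzk⟩ := hk
    have hzk' : ⌊z / δ⌋ = k := hzk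
    rw [Set.mem_add] at hz
    obtain ⟨u, hu, v, hv, rfl⟩ := hz
    obtain ⟨e, he0, he1, hfe⟩ := floor_pair hδ u v
    have hin : ⌊u / δ⌋ ∈ phi δ (X + ∑ i ∈ s, g i) := ⟨u, hu, rfl⟩
    obtain ⟨ab, hab, c, hc, habc⟩ := ih hin
    rw [Set.mem_add] at hab
    obtain ⟨a, ha, b, hb, rfl⟩ := hab
    rw [Set.mem_Icc] at hc
    refine ⟨a + (⌊v / δ⌋ + b), Set.add_mem_add ha ?_, c + e, ?_, ?_⟩
    · rw [Finset.sum_insert hj]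
      exact Set.add_mem_add ⟨v, hv, rfl⟩ hb
    · rw [Set.mem_Icc, Finset.card_insert_of_notMem hj]
      push_cast
      omega
    · have hfl : ⌊(u + v) / δ⌋ = k := hzk'
      have habc' : a + b + c = ⌊u / δ⌋ := habc
      show a + (⌊v / δ⌋ + b) + (c + e) = k
      omega


lemma prodadd (s t u v : Finset ℤ) : (s ×ˢ t) + (u ×ˢ v) = (s + u) ×ˢ (t + v) := by
  ext ⟨a, b⟩
  simp only [Finset.mem_add, Finset.mem_product, Prod.exists, Prod.mk_add_mk, Prod.mk.injEq]
  constructor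
  · rintro ⟨x, y, ⟨hx, hy⟩, z, w, ⟨hz, hw⟩, h1, h2⟩
    exact ⟨⟨x, hx, z, hz, h1⟩, ⟨y, hy, w, hw, h2⟩⟩
  · rintro ⟨⟨x, hx, z, hz, h1⟩, ⟨y, hy, w, hw, h2⟩⟩
    exact ⟨x, y, ⟨hx, hy⟩, z, w, ⟨hz, hw⟩, h1, h2⟩

lemma core (n : ℕ) (A : Finset ℤ) (hA : A.Nonempty) (B : Fin n → Finset ℤ)
    (K : Fin n → ℝ) (hK : ∀ i, 1 ≤ K i)
    (hyp : ∀ i, (#(A + B i) : ℝ) ≤ K i * #A) :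
    ∃ X, X ⊆ A ∧ X.Nonempty ∧
      (#(X + ∑ i, B i) : ℝ) ≤ (∏ i, (2 * (n : ℝ) * K i)) * #X := by
  classical
  have hKpos : ∀ i, (0:ℝ) < K i := fun i => lt_of_lt_of_le one_pos (hK i)
  set c : Fin n → ℕ := fun i => ⌈∏ j ∈ Finset.univ.erase i, K j⌉₊ with hc
  have hprod1 : ∀ i : Fin n, (1:ℝ) ≤ ∏ j ∈ Finset.univ.erase i, K j := fun i =>
    by simpa using Finset.prod_le_prod (s := Finset.univ.erase i) (fun _ _ => zero_le_one) (fun j _ => hK j)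
  have hc1 : ∀ i, 1 ≤ c i := fun i =>
    Nat.one_le_ceil_iff.2 (lt_of_lt_of_le one_pos (hprod1 i))
  have hcK : ∀ i, (∏ j ∈ Finset.univ.erase i, K j) ≤ (c i : ℝ) := fun i => Nat.le_ceil _
  have hc2 : ∀ i, (c i : ℝ) ≤ 2 * ∏ j ∈ Finset.univ.erase i, K j := by
    intro i
    have h := (Nat.ceil_lt_add_one (le_trans zero_le_one (hprod1 i))).le
    have := hprod1 i
    calc (c i : ℝ) ≤ (∏ j ∈ Finset.univ.erase i, K j) + 1 := h
      _ ≤ 2 * ∏ j ∈ Finset.univ.erase i, K j := by linarith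
  have hKsplit : ∀ i : Fin n, K i * ∏ j ∈ Finset.univ.erase i, K j = ∏ j, K j :=
    fun i => Finset.mul_prod_erase Finset.univ K (Finset.mem_univ i)
  -- markers
  set o : Fin n → ℕ := fun i => ∑ j ∈ Finset.Iio i, c j with ho
  set S : Fin n → Finset ℤ := fun i => Finset.Ico (o i : ℤ) ((o i : ℤ) + c i) with hS
  have cardS : ∀ i, #(S i) = c i := by
    intro i
    simp only [hS, Int.card_Ico]
    omega
  have hSd : ∀ i j : Fin n, i ≠ j → Disjoint (S i) (S j) := by
    have key : ∀ i j : Fin n, i < j → o i + c i ≤ o j := by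
      intro i j hij
      have h1 : Finset.Iic i ⊆ Finset.Iio j := by
        intro k hk
        rw [Finset.mem_Iic] at hk
        rw [Finset.mem_Iio]
        exact lt_of_le_of_lt hk hij
      have h2 : ∑ k ∈ Finset.Iic i, c k ≤ ∑ k ∈ Finset.Iio j, c k :=
        Finset.sum_le_sum_of_subset h1
      have h3 : ∑ k ∈ Finset.Iic i, c k = c i + ∑ k ∈ Finset.Iio i, c k := by
        rw [← Finset.Iio_insert, Finset.sum_insert (by simp)]
      simp only [ho]
      omega
    have key2 : ∀ i j : Fin n, i < j → Disjoint (S i) (S j) := by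
      intro i j hij
      have hk := key i j hij
      rw [Finset.disjoint_left]
      intro k hk1 hk2
      simp only [hS, Finset.mem_Ico] at hk1 hk2
      have : ((o i : ℤ) + (c i : ℤ)) ≤ (o j : ℤ) := by exact_mod_cast hk
      omega
    intro i j hij
    rcases lt_or_gt_of_ne hij with h | h
    · exact key2 i j h
    · exact (key2 j i h).symm
  set L : Finset ℤ → Finset (ℤ × ℤ) := fun Z => Z ×ˢ ({0} : Finset ℤ) with hL
  set Bh : Finset (ℤ × ℤ) := Finset.univ.biUnion (fun i => (B i) ×ˢ S i) with hBh
  have cardL : ∀ Z, #(L Z) = #Z := by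
    intro Z
    simp [hL]
  have hLL : ∀ Z C : Finset ℤ, L Z + L C = L (Z + C) := by
    intro Z C
    simp only [hL]
    rw [prodadd, Finset.singleton_add_singleton, add_zero]
  have hLB : ∀ Z : Finset ℤ, L Z + Bh = Finset.univ.biUnion (fun i => (Z + B i) ×ˢ S i) := by
    intro Z
    ext ⟨a, m⟩
    simp only [hBh, hL, Finset.mem_add, Finset.mem_biUnion, Finset.mem_univ, true_and,
      Finset.mem_product, Finset.mem_singleton, Prod.exists, Prod.mk_add_mk, Prod.mk.injEq]
    constructor
    · rintro ⟨x, y, ⟨hx, rfl⟩, z, w, ⟨i, hz, hw⟩, h1, h2⟩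
      exact ⟨i, ⟨x, hx, z, hz, h1⟩, by
        have hmw : m = w := by omega
        rwa [hmw]⟩
    · rintro ⟨i, ⟨hmem, hm⟩⟩
      obtain ⟨x, hx, z, hz, hxz⟩ := hmem
      exact ⟨x, 0, ⟨hx, rfl⟩, z, m, ⟨i, hz, hm⟩, hxz, by omega⟩
  have cardLB : ∀ Z : Finset ℤ, #(L Z + Bh) = ∑ i, #(Z + B i) * c i := by
    intro Z
    rw [hLB Z, Finset.card_biUnion]
    · exact Finset.sum_congr rfl (fun i _ => by rw [Finset.card_product, cardS i])
    · intro x _ y _ hxy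
      simp only [Function.onFun]
      rw [Finset.disjoint_left]
      rintro ⟨a, m⟩ h1 h2
      rw [Finset.mem_product] at h1 h2
      exact Finset.disjoint_left.1 (hSd x y hxy) h1.2 h2.2
  set num : Finset ℤ → ℝ := fun Z => ∑ i, (c i : ℝ) * #(Z + B i) with hnum
  have hcard_num : ∀ Z, (#(L Z + Bh) : ℝ) = num Z := by
    intro Z
    rw [cardLB Z, hnum]
    push_cast
    exact Finset.sum_congr rfl (fun i _ => by ring)
  have hfam : A ∈ A.powerset.erase ∅ := by
    rw [Finset.mem_erase, Finset.mem_powerset]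
    exact ⟨hA.ne_empty, Finset.Subset.refl A⟩
  obtain ⟨A', hA'mem, hmin⟩ := Finset.exists_min_image (A.powerset.erase ∅)
      (fun Z => num Z / #Z) ⟨A, hfam⟩
  rw [Finset.mem_erase, Finset.mem_powerset] at hA'mem
  obtain ⟨hA'ne, hA'A⟩ := hA'mem
  have hA'nonempty : A'.Nonempty := Finset.nonempty_iff_ne_empty.2 hA'ne
  have hA'pos : (0:ℝ) < #A' := by exact_mod_cast Finset.card_pos.2 hA'nonempty
  have hApos : (0:ℝ) < #A := by exact_mod_cast Finset.card_pos.2 hA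
  -- Petridis hypothesis
  have hPet : ∀ Y ⊆ L A', #(L A' + Bh) * #Y ≤ #(Y + Bh) * #(L A') := by
    intro Y hY
    set Y0 := Y.image Prod.fst with hY0
    have hYeq : Y = L Y0 := by
      ext ⟨a, m⟩
      simp only [hL, Finset.mem_product, Finset.mem_singleton, hY0, Finset.mem_image, Prod.exists]
      constructor
      · intro hmem
        have h2 := hY hmem
        simp only [hL, Finset.mem_product, Finset.mem_singleton] at h2
        exact ⟨⟨a, m, hmem, rfl⟩, h2.2⟩
      · rintro ⟨⟨x, y, hxy, rfl⟩, rfl⟩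
        have h2 := hY hxy
        simp only [hL, Finset.mem_product, Finset.mem_singleton] at h2
        rwa [h2.2] at hxy
    rcases Y0.eq_empty_or_nonempty with h0 | h0
    · have : Y = ∅ := by rw [hYeq, h0, hL]; simp
      simp [this]
    · have hY0A' : Y0 ⊆ A' := by
        intro a ha
        have : ((a, 0) : ℤ × ℤ) ∈ L Y0 := by
          simp only [hL, Finset.mem_product, Finset.mem_singleton]
          simp [ha]
        have := hY (by rwa [← hYeq] at this)
        simp only [hL, Finset.mem_product] at this
        exact this.1
      have hmem : Y0 ∈ A.powerset.erase ∅ := by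
        rw [Finset.mem_erase, Finset.mem_powerset]
        exact ⟨h0.ne_empty, hY0A'.trans hA'A⟩
      have h := hmin Y0 hmem
      have hY0pos : (0:ℝ) < #Y0 := by exact_mod_cast Finset.card_pos.2 h0
      rw [div_le_div_iff₀ hA'pos hY0pos] at h
      have goalR : ((#(L A' + Bh) : ℝ)) * (#(L Y0) : ℝ) ≤ (#(L Y0 + Bh) : ℝ) * (#(L A') : ℝ) := by
        rw [hcard_num, hcard_num, cardL, cardL]
        exact h
      rw [hYeq]
      exact_mod_cast goalR
  have hnumA : num A' ≤ (∑ j, (c j : ℝ) * K j) * #A' := by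
    have h := hmin A hfam
    rw [div_le_div_iff₀ hA'pos hApos] at h
    have h2 : num A ≤ (∑ j, (c j : ℝ) * K j) * #A := by
      rw [hnum, Finset.sum_mul]
      refine Finset.sum_le_sum ?_
      intro j _
      have := mul_le_mul_of_nonneg_left (hyp j) (by positivity : (0:ℝ) ≤ (c j : ℝ))
      calc (c j : ℝ) * #(A + B j) ≤ (c j : ℝ) * (K j * #A) := this
        _ = (c j : ℝ) * K j * #A := by ring
    rw [← mul_le_mul_iff_of_pos_right hApos]
    calc num A' * #A ≤ num A * #A' := h
      _ ≤ ((∑ j, (c j : ℝ) * K j) * #A) * #A' := mul_le_mul_of_nonneg_right h2 hA'pos.le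
      _ = (∑ j, (c j : ℝ) * K j) * #A' * #A := by ring
  have hsum : (∑ j, (c j : ℝ) * K j) ≤ 2 * (n:ℝ) * (∏ j, K j) := by
    calc (∑ j, (c j : ℝ) * K j) ≤ ∑ _j : Fin n, 2 * ∏ k, K k := by
          refine Finset.sum_le_sum ?_
          intro j _
          calc (c j : ℝ) * K j ≤ (2 * ∏ k ∈ Finset.univ.erase j, K k) * K j :=
                mul_le_mul_of_nonneg_right (hc2 j) (hKpos j).le
            _ = 2 * (K j * ∏ k ∈ Finset.univ.erase j, K k) := by ring
            _ = 2 * ∏ k, K k := by rw [hKsplit j]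
      _ = (n:ℝ) * (2 * ∏ k, K k) := by
          rw [Finset.sum_const, Finset.card_univ, Fintype.card_fin, nsmul_eq_mul]
      _ = 2 * (n:ℝ) * (∏ j, K j) := by ring
  have hkey : ∀ (i : Fin n) (C : Finset ℤ),
      (#(A' + B i + C) : ℝ) ≤ 2 * (n:ℝ) * K i * #(A' + C) := by
    intro i C
    have hP := Finset.pluennecke_petridis_inequality_add (L C) hPet
    have e : L A' + Bh + L C = L (A' + C) + Bh := by
      rw [add_right_comm, hLL]
    rw [add_comm (L C) (L A'), hLL, cardL, cardL] at hP
    have hPR : num (A' + C) * (#A' : ℝ) ≤ num A' * (#(A' + C) : ℝ) := by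
      have h2 : ((#(L (A' + C) + Bh) * #A' : ℕ) : ℝ) ≤ ((#(L A' + Bh) * #(A' + C) : ℕ) : ℝ) :=
        Nat.cast_le.2 hP
      push_cast at h2
      rwa [hcard_num, hcard_num] at h2
    have hterm : (c i : ℝ) * #(A' + C + B i) ≤ num (A' + C) := by
      rw [hnum]
      exact Finset.single_le_sum (f := fun j => (c j : ℝ) * #(A' + C + B j))
        (fun j _ => by positivity) (Finset.mem_univ i)
    have hcipos : (0:ℝ) < (c i : ℝ) := by exact_mod_cast hc1 i
    have hprod_ci : 2 * (n:ℝ) * (∏ j, K j) ≤ 2 * (n:ℝ) * K i * (c i : ℝ) := by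
      rw [← hKsplit i]
      have hn : (0:ℝ) ≤ 2 * (n:ℝ) * K i := by
        have := (hKpos i).le
        positivity
      calc 2 * (n:ℝ) * (K i * ∏ j ∈ Finset.univ.erase i, K j)
          = (2 * (n:ℝ) * K i) * ∏ j ∈ Finset.univ.erase i, K j := by ring
        _ ≤ (2 * (n:ℝ) * K i) * (c i : ℝ) := mul_le_mul_of_nonneg_left (hcK i) hn
    have hACnn : (0:ℝ) ≤ (#(A' + C) : ℝ) := by positivity
    have main : (#(A' + B i + C) : ℝ) * ((c i : ℝ) * #A')
        ≤ (2 * (n:ℝ) * K i * #(A' + C)) * ((c i : ℝ) * #A') := by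
      calc (#(A' + B i + C) : ℝ) * ((c i : ℝ) * #A')
          = ((c i : ℝ) * #(A' + C + B i)) * #A' := by
            rw [add_right_comm A' (B i) C]; ring
        _ ≤ num (A' + C) * #A' := mul_le_mul_of_nonneg_right hterm hA'pos.le
        _ ≤ num A' * #(A' + C) := hPR
        _ ≤ ((∑ j, (c j : ℝ) * K j) * #A') * #(A' + C) :=
            mul_le_mul_of_nonneg_right hnumA hACnn
        _ ≤ ((2 * (n:ℝ) * (∏ j, K j)) * #A') * #(A' + C) :=
            mul_le_mul_of_nonneg_right (mul_le_mul_of_nonneg_right hsum hA'pos.le) hACnn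
        _ ≤ ((2 * (n:ℝ) * K i * (c i : ℝ)) * #A') * #(A' + C) :=
            mul_le_mul_of_nonneg_right (mul_le_mul_of_nonneg_right hprod_ci hA'pos.le) hACnn
        _ = (2 * (n:ℝ) * K i * #(A' + C)) * ((c i : ℝ) * #A') := by ring
    exact le_of_mul_le_mul_right main (by positivity)
  have hchain : ∀ s : Finset (Fin n),
      (#(A' + ∑ i ∈ s, B i) : ℝ) ≤ (∏ i ∈ s, (2 * (n:ℝ) * K i)) * #A' := by
    intro s
    induction s using Finset.induction with
    | empty => rw [Finset.sum_empty, add_zero, Finset.prod_empty, one_mul]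
    | @insert j s hj ih =>
      rw [Finset.sum_insert hj, Finset.prod_insert hj, ← add_assoc]
      have hnn : (0:ℝ) ≤ 2 * (n:ℝ) * K j := by
        have := (hKpos j).le
        positivity
      calc (#(A' + B j + ∑ i ∈ s, B i) : ℝ)
          ≤ 2 * (n:ℝ) * K j * #(A' + ∑ i ∈ s, B i) := hkey j _
        _ ≤ 2 * (n:ℝ) * K j * ((∏ i ∈ s, (2 * (n:ℝ) * K i)) * #A') :=
            mul_le_mul_of_nonneg_left ih hnn
        _ = (2 * (n:ℝ) * K j * ∏ i ∈ s, (2 * (n:ℝ) * K i)) * #A' := by ring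
  exact ⟨A', hA'A, hA'nonempty, hchain Finset.univ⟩

lemma half (n : ℕ) (A : Finset ℤ) (hA : A.Nonempty) (B : Fin n → Finset ℤ)
    (K : Fin n → ℝ) (hK : ∀ i, 1 ≤ K i)
    (hyp : ∀ i, (#(A + B i) : ℝ) ≤ K i * #A) :
    ∃ A', A' ⊆ A ∧ (#A : ℝ) / 2 ≤ #A' ∧
      (#(A' + ∑ i, B i) : ℝ) ≤ (∏ i, (4 * (n : ℝ) * K i)) * #A := by
  classical
  have hApos : (0:ℝ) < #A := by exact_mod_cast Finset.card_pos.2 hA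
  have hprodnn : (0:ℝ) ≤ ∏ i, (4 * (n : ℝ) * K i) := by
    refine Finset.prod_nonneg ?_
    intro i _
    have := (lt_of_lt_of_le one_pos (hK i)).le
    positivity
  have F : ∀ (m : ℕ) (R : Finset ℤ), #R ≤ m → R ⊆ A →
      ∃ P, P ⊆ R ∧ (#(R \ P) : ℝ) ≤ (#A : ℝ) / 2 ∧
        (#(P + ∑ i, B i) : ℝ) ≤ (∏ i, (4 * (n : ℝ) * K i)) * #P := by
    intro m
    induction m with
    | zero =>
      intro R hR hRA
      have : R = ∅ := Finset.card_eq_zero.1 (Nat.le_zero.1 hR)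
      refine ⟨∅, Finset.empty_subset _, ?_, ?_⟩
      · rw [this]
        simp
        positivity
      · rw [Finset.empty_add]
        simp
    | succ m ih =>
      intro R hR hRA
      by_cases hhalf : (#R : ℝ) ≤ (#A : ℝ) / 2
      · refine ⟨∅, Finset.empty_subset _, ?_, ?_⟩
        · simpa using hhalf
        · rw [Finset.empty_add]
          simp
      · push_neg at hhalf
        have hRne : R.Nonempty := by
          rw [← Finset.card_pos]
          by_contra h
          push_neg at h
          have : #R = 0 := Nat.le_zero.1 (Nat.lt_succ_iff.1 (Nat.lt_of_not_le (by omega)))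
          rw [this] at hhalf
          simp at hhalf
          linarith
        have hRpos : (0:ℝ) < #R := by exact_mod_cast Finset.card_pos.2 hRne
        have hA2R : (#A : ℝ) ≤ 2 * #R := by linarith
        have hyp' : ∀ i, (#(R + B i) : ℝ) ≤ (2 * K i) * #R := by
          intro i
          have h1 : #(R + B i) ≤ #(A + B i) := by
            apply Finset.card_le_card
            exact Finset.add_subset_add_right hRA
          have hKnn : (0:ℝ) ≤ K i := (lt_of_lt_of_le one_pos (hK i)).le
          calc (#(R + B i) : ℝ) ≤ (#(A + B i) : ℝ) := by exact_mod_cast h1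
            _ ≤ K i * #A := hyp i
            _ ≤ K i * (2 * #R) := mul_le_mul_of_nonneg_left hA2R hKnn
            _ = (2 * K i) * #R := by ring
        obtain ⟨X, hXR, hXne, hXbound⟩ := core n R hRne B (fun i => 2 * K i)
          (fun i => by show (1:ℝ) ≤ 2 * K i; linarith [hK i]) hyp'
        have hXbound' : (#(X + ∑ i, B i) : ℝ) ≤ (∏ i, (4 * (n : ℝ) * K i)) * #X := by
          refine hXbound.trans_eq ?_
          congr 1
          exact Finset.prod_congr rfl (fun i _ => by ring)
        have hcardsd : #(R \ X) ≤ m := by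
          have h1 := Finset.card_sdiff_add_card_eq_card hXR
          have h2 : 1 ≤ #X := Finset.card_pos.2 hXne
          omega
        obtain ⟨P', hP'sub, hP'half, hP'bound⟩ := ih (R \ X) hcardsd
          ((Finset.sdiff_subset).trans hRA)
        refine ⟨P' ∪ X, Finset.union_subset (hP'sub.trans Finset.sdiff_subset) hXR, ?_, ?_⟩
        · have hre : R \ (P' ∪ X) = (R \ X) \ P' := by
            ext a
            simp only [Finset.mem_sdiff, Finset.mem_union]
            tauto
          rw [hre]
          exact hP'half
        · have hdisj : Disjoint P' X := by
            rw [Finset.disjoint_left]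
            intro a ha hax
            have := hP'sub ha
            rw [Finset.mem_sdiff] at this
            exact this.2 hax
          have hcard : #(P' ∪ X) = #P' + #X := Finset.card_union_of_disjoint hdisj
          have hre : (P' ∪ X) + ∑ i, B i = (P' + ∑ i, B i) ∪ (X + ∑ i, B i) :=
            Finset.union_add
          calc (#((P' ∪ X) + ∑ i, B i) : ℝ)
              ≤ (#(P' + ∑ i, B i) : ℝ) + #(X + ∑ i, B i) := by
                rw [hre]
                exact_mod_cast Finset.card_union_le _ _
            _ ≤ (∏ i, (4 * (n : ℝ) * K i)) * #P' + (∏ i, (4 * (n : ℝ) * K i)) * #X := by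
                exact add_le_add hP'bound hXbound'
            _ = (∏ i, (4 * (n : ℝ) * K i)) * (#P' + #X) := by ring
            _ = (∏ i, (4 * (n : ℝ) * K i)) * #(P' ∪ X) := by
                rw [hcard]
                push_cast
                ring
  obtain ⟨P, hPA, hPhalf, hPbound⟩ := F #A A le_rfl Finset.Subset.rfl
  have hcards : #(A \ P) + #P = #A := Finset.card_sdiff_add_card_eq_card hPA
  refine ⟨P, hPA, ?_, ?_⟩
  · have : ((#(A \ P) : ℝ)) + #P = #A := by exact_mod_cast hcards
    linarith
  · refine hPbound.trans ?_
    apply mul_le_mul_of_nonneg_left _ hprodnn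
    exact_mod_cast Finset.card_le_card hPA



lemma coe_sum {n : ℕ} (g : Fin n → Finset ℤ) (s : Finset (Fin n)) :
    (↑(∑ i ∈ s, g i) : Set ℤ) = ∑ i ∈ s, (↑(g i) : Set ℤ) := by
  classical
  induction s using Finset.induction with
  | empty => simp
  | @insert j s hj ih => rw [Finset.sum_insert hj, Finset.sum_insert hj, Finset.coe_add, ih]

end Stmt19

/-- Plünnecke–Ruzsa for covering numbers: if `|A + Bᵢ|_δ ≤ Kᵢ|A|_δ` for
`i = 1,…,n`, then there is `A' ⊆ A` with `|A'|_δ ≥ |A|_δ/2` and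
`|A' + B₁ + ⋯ + B_n|_δ ≲_n K₁⋯K_n·|A|_δ`. -/
theorem stmt19 (n : ℕ) : ∃ Cn : ℝ, 0 < Cn ∧
    ∀ (δ : ℝ) (A : Set ℝ) (B : Fin n → Set ℝ) (K : Fin n → ℝ),
      0 < δ → A.Finite → A.Nonempty → (∀ i, (B i).Finite) → (∀ i, 1 ≤ K i) →
      (∀ i, (cov1 δ (A + B i) : ℝ) ≤ K i * cov1 δ A) →
      ∃ A' ⊆ A, (cov1 δ A : ℝ) / 2 ≤ (cov1 δ A' : ℝ) ∧
        (cov1 δ (A' + ∑ i, B i) : ℝ) ≤ Cn * (∏ i, K i) * cov1 δ A := by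
  classical
  refine ⟨((n : ℝ) + 1) * (8 * (n : ℝ) + 8) ^ n, by positivity, ?_⟩
  intro δ A B K hδ hAfin hAne hBfin hK hyp
  have hKnn : ∀ i, (0:ℝ) ≤ K i := fun i => (lt_of_lt_of_le one_pos (hK i)).le
  -- finset versions
  have hphiA : (Stmt19.phi δ A).Finite := hAfin.image _
  have hphiB : ∀ i, (Stmt19.phi δ (B i)).Finite := fun i => (hBfin i).image _
  have hphiAB : ∀ i, (Stmt19.phi δ (A + B i)).Finite := fun i => (hAfin.add (hBfin i)).image _
  set fA : Finset ℤ := hphiA.toFinset with hfA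
  set fB : Fin n → Finset ℤ := fun i => (hphiB i).toFinset with hfB
  set fAB : Fin n → Finset ℤ := fun i => (hphiAB i).toFinset with hfAB
  have hfAcoe : (↑fA : Set ℤ) = Stmt19.phi δ A := hphiA.coe_toFinset
  have hfBcoe : ∀ i, (↑(fB i) : Set ℤ) = Stmt19.phi δ (B i) := fun i => (hphiB i).coe_toFinset
  have hfABcoe : ∀ i, (↑(fAB i) : Set ℤ) = Stmt19.phi δ (A + B i) :=
    fun i => (hphiAB i).coe_toFinset
  have covA : cov1 δ A = #fA := by
    rw [Stmt19.cov1_eq hδ, ← hfAcoe, Set.ncard_coe_finset]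
  have covAB : ∀ i, cov1 δ (A + B i) = #(fAB i) := by
    intro i
    rw [Stmt19.cov1_eq hδ, ← hfABcoe i, Set.ncard_coe_finset]
  have hfAne : fA.Nonempty := by
    obtain ⟨x, hx⟩ := hAne
    exact ⟨⌊x / δ⌋, hphiA.mem_toFinset.2 ⟨x, hx, rfl⟩⟩
  -- discrete hypotheses
  have hyp' : ∀ i, (#(fA + fB i) : ℝ) ≤ (2 * K i) * #fA := by
    intro i
    have hsub : fA + fB i ⊆ fAB i + Finset.Icc (-1 : ℤ) 0 := by
      rw [← Finset.coe_subset, Finset.coe_add, Finset.coe_add, Finset.coe_Icc,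
        hfAcoe, hfBcoe i, hfABcoe i]
      exact Stmt19.phi_add_phi_subset hδ A (B i)
    have h1 : #(fA + fB i) ≤ #(fAB i) * 2 := by
      refine (Finset.card_le_card hsub).trans ?_
      refine (Finset.card_add_le).trans ?_
      have : #(Finset.Icc (-1 : ℤ) 0) = 2 := by decide
      rw [this]
    calc (#(fA + fB i) : ℝ) ≤ (#(fAB i) : ℝ) * 2 := by exact_mod_cast h1
      _ = 2 * (cov1 δ (A + B i) : ℝ) := by rw [covAB i]; ring
      _ ≤ 2 * (K i * cov1 δ A) := by
          have := hyp i
          linarith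
      _ = (2 * K i) * #fA := by rw [covA]; ring
  obtain ⟨P, hPfA, hPhalf, hPbound⟩ := Stmt19.half n fA hfAne fB (fun i => 2 * K i)
    (fun i => by show (1:ℝ) ≤ 2 * K i; linarith [hK i]) hyp'
  beta_reduce at hPbound
  -- the real subset
  set A' : Set ℝ := A ∩ ((fun x : ℝ => ⌊x / δ⌋) ⁻¹' (↑P : Set ℤ)) with hA'
  have hA'A : A' ⊆ A := Set.inter_subset_left
  have phiA' : Stmt19.phi δ A' = (↑P : Set ℤ) := by
    apply Set.Subset.antisymm
    · rintro k ⟨x, hx, rfl⟩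
      exact hx.2
    · intro k hk
      have hkfA : k ∈ fA := hPfA hk
      have : k ∈ Stmt19.phi δ A := by rw [← hfAcoe]; exact_mod_cast hkfA
      obtain ⟨x, hx, rfl⟩ := this
      exact ⟨x, ⟨hx, hk⟩, rfl⟩
  have covA' : cov1 δ A' = #P := by
    rw [Stmt19.cov1_eq hδ, phiA', Set.ncard_coe_finset]
  refine ⟨A', hA'A, ?_, ?_⟩
  · rw [covA, covA']
    exact hPhalf
  · -- final bound
    have hsub2 : Stmt19.phi δ (A' + ∑ i, B i) ⊆
        ↑(P + (∑ i, fB i) + Finset.Icc (0 : ℤ) (n : ℤ)) := by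
      rw [Finset.coe_add, Finset.coe_add, Finset.coe_Icc, Stmt19.coe_sum, ← phiA']
      simp only [hfBcoe]
      have h := Stmt19.phi_add_sum_subset hδ A' B Finset.univ
      rw [Finset.card_univ, Fintype.card_fin] at h
      exact h
    have hfin : ((↑(P + (∑ i, fB i) + Finset.Icc (0 : ℤ) (n : ℤ)) : Set ℤ)).Finite :=
      Finset.finite_toSet _
    have h3 : cov1 δ (A' + ∑ i, B i) ≤ #(P + (∑ i, fB i) + Finset.Icc (0 : ℤ) (n : ℤ)) := by
      rw [Stmt19.cov1_eq hδ]
      calc (Stmt19.phi δ (A' + ∑ i, B i)).ncard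
          ≤ (↑(P + (∑ i, fB i) + Finset.Icc (0 : ℤ) (n : ℤ)) : Set ℤ).ncard :=
            Set.ncard_le_ncard hsub2 hfin
        _ = _ := Set.ncard_coe_finset _
    have h4 : #(P + (∑ i, fB i) + Finset.Icc (0 : ℤ) (n : ℤ)) ≤ #(P + ∑ i, fB i) * (n + 1) := by
      refine (Finset.card_add_le).trans ?_
      have hicc : #(Finset.Icc (0 : ℤ) (n : ℤ)) = n + 1 := by
        rw [Int.card_Icc]
        omega
      rw [hicc]
    have h5 : (∏ i, (4 * (n:ℝ) * (2 * K i))) = (8 * (n:ℝ)) ^ n * ∏ i, K i := by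
      calc (∏ i, (4 * (n:ℝ) * (2 * K i))) = ∏ i, ((8 * (n:ℝ)) * K i) :=
            Finset.prod_congr rfl (fun i _ => by ring)
        _ = (∏ _i : Fin n, (8 * (n:ℝ))) * ∏ i, K i := Finset.prod_mul_distrib
        _ = (8 * (n:ℝ)) ^ n * ∏ i, K i := by
            rw [Finset.prod_const, Finset.card_univ, Fintype.card_fin]
    have hprodK : (0:ℝ) ≤ ∏ i, K i := Finset.prod_nonneg (fun i _ => hKnn i)
    have hfAnn : (0:ℝ) ≤ (#fA : ℝ) := by positivity
    have hpow : (8 * (n:ℝ)) ^ n ≤ (8 * (n:ℝ) + 8) ^ n :=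
      pow_le_pow_left₀ (by positivity) (by linarith) n
    calc (cov1 δ (A' + ∑ i, B i) : ℝ)
        ≤ (#(P + ∑ i, fB i) : ℝ) * ((n:ℝ) + 1) := by exact_mod_cast h3.trans h4
      _ ≤ ((∏ i, (4 * (n:ℝ) * (2 * K i))) * #fA) * ((n:ℝ) + 1) :=
          mul_le_mul_of_nonneg_right hPbound (by positivity)
      _ = ((n:ℝ) + 1) * ((8 * (n:ℝ)) ^ n * ∏ i, K i) * #fA := by rw [h5]; ring
      _ ≤ ((n:ℝ) + 1) * ((8 * (n:ℝ) + 8) ^ n * ∏ i, K i) * #fA := by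
          apply mul_le_mul_of_nonneg_right _ hfAnn
          apply mul_le_mul_of_nonneg_left _ (by positivity)
          exact mul_le_mul_of_nonneg_right hpow hprodK
      _ = ((n:ℝ) + 1) * (8 * (n:ℝ) + 8) ^ n * (∏ i, K i) * (cov1 δ A : ℝ) := by
          rw [covA]; ring
end
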